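/- arXiv:1512.08750 — 3 statements merged into one kernel-verified Lean document; each statement's English description precedes it below -/
import Mathlib

section
/- A function x : 𝕋₀ → ℝ^{mn} is a solution of the SICNN on 𝕋₀ (i.e., x satisfies the differential equation on each interval [θ_{2k−1}, θ_{2k}] together with the difference relations x_{ij}(θ_{2k+1}) = (1 − δ_k a_{ij}) x_{ij}(θ_{2k}) − δ_k Σ_{C_{hl}∈N_r(i,j)} C_{ij}^{hl} f(x_{hl}(θ_{2k})) x_{ij}(θ_{2k}) + δ_k ζ_k^{ij}) if and only if the function y defined by y(s) = x(ψ⁻¹(s)) is a solution of the associated impulsive system on ℝ. -/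
open Filter Topology MeasureTheory

noncomputable section

/-- `δ_k = θ_{2k+1} - θ_{2k}`. -/
def tdelta (θ : ℤ → ℝ) (k : ℤ) : ℝ := θ (2 * k + 1) - θ (2 * k)

/-- The time scale `𝕋₀ = ⋃ₖ [θ_{2k-1}, θ_{2k}]`. -/
def TScale (θ : ℤ → ℝ) : Set ℝ := ⋃ k : ℤ, Set.Icc (θ (2 * k - 1)) (θ (2 * k))

/-- `𝕋₀' = 𝕋₀ \ ⋃ₖ {θ_{2k-1}}`. -/
def TScale' (θ : ℤ → ℝ) : Set ℝ := TScale θ \ ⋃ k : ℤ, {θ (2 * k - 1)}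

/-- The ψ-substitution:  `ψ(t) = t - Σ_{0<θ_{2k}<t} δ_k` for `t ≥ 0` and
`ψ(t) = t + Σ_{t≤θ_{2k}<0} δ_k` for `t < 0`. -/
def psi (θ : ℤ → ℝ) (t : ℝ) : ℝ :=
  if 0 ≤ t then t - ∑' k : ℤ, (if 0 < θ (2 * k) ∧ θ (2 * k) < t then tdelta θ k else 0)
  else t + ∑' k : ℤ, (if t ≤ θ (2 * k) ∧ θ (2 * k) < 0 then tdelta θ k else 0)

/-- `s_k = ψ(θ_{2k})`. -/
def sk (θ : ℤ → ℝ) (k : ℤ) : ℝ := psi θ (θ (2 * k))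

/-- The inverse of the ψ-substitution:  `ψ⁻¹(s) = s + Σ_{0<s_k<s} δ_k` for `s ≥ 0` and
`ψ⁻¹(s) = s - Σ_{s≤s_k<0} δ_k` for `s < 0`. -/
def psiInv (θ : ℤ → ℝ) (s : ℝ) : ℝ :=
  if 0 ≤ s then s + ∑' k : ℤ, (if 0 < sk θ k ∧ sk θ k < s then tdelta θ k else 0)
  else s - ∑' k : ℤ, (if s ≤ sk θ k ∧ sk θ k < 0 then tdelta θ k else 0)

/-- Standing hypotheses on the time scale:  `θ` is strictly increasing with `|θ_k| → ∞` as
`|k| → ∞`, `θ_{-1} < 0 < θ_0`, both series `Σ (θ_{2k} - θ_{2k-1})` diverge, the `ω`-property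
holds, and the sequence `δ_k` is `p`-periodic with `p > 0`. -/
structure TimeScaleHyp (θ : ℤ → ℝ) (ω : ℝ) (p : ℕ) : Prop where
  mono : StrictMono θ
  tendsto_top : Tendsto θ atTop atTop
  tendsto_bot : Tendsto θ atBot atBot
  theta_neg : θ (-1) < 0
  theta_pos : 0 < θ 0
  sum_top : Tendsto
    (fun N : ℕ => ∑ k ∈ Finset.range N, (θ (2 * (k : ℤ)) - θ (2 * (k : ℤ) - 1))) atTop atTop
  sum_bot : Tendsto
    (fun N : ℕ => ∑ k ∈ Finset.range N, (θ (2 * (-(k : ℤ))) - θ (2 * (-(k : ℤ)) - 1))) atTop atTop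
  omega_pos : 0 < ω
  omega_prop : ∀ t ∈ TScale θ, t + ω ∈ TScale θ
  p_pos : 0 < p
  delta_periodic : ∀ k : ℤ, tdelta θ (k + (p : ℤ)) = tdelta θ k

/-- The `r`-neighborhood `N_r(i,j)` of the cell `C_{ij}`. -/
def Nbhd {m n : ℕ} (r : ℕ) (i : Fin m) (j : Fin n) : Finset (Fin m × Fin n) :=
  Finset.univ.filter fun q =>
    max |(q.1.val : ℤ) - (i.val : ℤ)| |(q.2.val : ℤ) - (j.val : ℤ)| ≤ (r : ℤ)

/-- `Σ_{C_{hl} ∈ N_r(i,j)} C_{ij}^{hl}`. -/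
def coupSum {m n : ℕ} (r : ℕ) (C : Fin m → Fin n → Fin m → Fin n → ℝ)
    (i : Fin m) (j : Fin n) : ℝ :=
  ∑ q ∈ Nbhd r i j, C i j q.1 q.2

/-- The shunting interaction term `Σ_{C_{hl} ∈ N_r(i,j)} C_{ij}^{hl} f(x_{hl}) x_{ij}`. -/
def interSum {m n : ℕ} (r : ℕ) (C : Fin m → Fin n → Fin m → Fin n → ℝ) (f : ℝ → ℝ)
    (x : Fin m → Fin n → ℝ) (i : Fin m) (j : Fin n) : ℝ :=
  ∑ q ∈ Nbhd r i j, C i j q.1 q.2 * f (x q.1 q.2) * x i j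

/-- `λ_{ij} = a_{ij} - (1/ψ(ω)) Σ_{ν=0}^{p-1} ln |1 - δ_ν a_{ij}|`. -/
def lamij (θ : ℤ → ℝ) (ω : ℝ) (p : ℕ) (a : ℝ) : ℝ :=
  a - (1 / psi θ ω) * ∑ ν ∈ Finset.range p, Real.log |1 - tdelta θ (ν : ℤ) * a|

/-- The Cauchy function `u_{ij}(s,τ) = e^{-a(s-τ)} ∏_{ν : τ ≤ s_ν < s} (1 - δ_ν a)`
(this unifies the two defining cases). -/
def ufun (θ : ℤ → ℝ) (a : ℝ) (s τ : ℝ) : ℝ :=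
  Real.exp (-a * (s - τ)) * ∏ᶠ (ν : ℤ) (_ : τ ≤ sk θ ν ∧ sk θ ν < s), (1 - tdelta θ ν * a)

/-- `u_{ij}(s, τ+)`, so that `u_{ij}(s, s_k+) = ufunR θ a s (sk θ k)`. -/
def ufunR (θ : ℤ → ℝ) (a : ℝ) (s τ : ℝ) : ℝ :=
  Real.exp (-a * (s - τ)) * ∏ᶠ (ν : ℤ) (_ : τ < sk θ ν ∧ sk θ ν < s), (1 - tdelta θ ν * a)

/-- A solution of the impulsive system associated with the SICNN:  on each interval
`(s_{k-1}, s_k]` the differential equation holds (with one-sided derivatives at the right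
endpoint); the solution is left-continuous on `ℝ`; and at each point `s_k` the right limit
exists and satisfies the jump condition
`Δy_{ij}|_{s_k} = -δ_k a_{ij} y_{ij}(s_k) - δ_k Σ C f y y + δ_k ζ_k^{ij}`. -/
def IsImpSol (θ : ℤ → ℝ) {m n : ℕ} (r : ℕ) (a : Fin m → Fin n → ℝ)
    (C : Fin m → Fin n → Fin m → Fin n → ℝ) (f : ℝ → ℝ)
    (L : ℝ → Fin m → Fin n → ℝ) (ζ : ℤ → Fin m → Fin n → ℝ)
    (y : ℝ → Fin m → Fin n → ℝ) : Prop :=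
  (∀ k : ℤ, ∀ s ∈ Set.Ioc (sk θ (k - 1)) (sk θ k), ∀ (i : Fin m) (j : Fin n),
      HasDerivWithinAt (fun τ => y τ i j)
        (-(a i j) * y s i j - interSum r C f (y s) i j + L (psiInv θ s) i j)
        (Set.Ioc (sk θ (k - 1)) (sk θ k)) s) ∧
  (∀ (s : ℝ) (i : Fin m) (j : Fin n),
      ContinuousWithinAt (fun τ => y τ i j) (Set.Iic s) s) ∧
  (∀ (k : ℤ) (i : Fin m) (j : Fin n),
      Tendsto (fun τ => y τ i j) (nhdsWithin (sk θ k) (Set.Ioi (sk θ k)))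
        (nhds (y (sk θ k) i j +
          (-(tdelta θ k) * a i j * y (sk θ k) i j
            - tdelta θ k * interSum r C f (y (sk θ k)) i j + tdelta θ k * ζ k i j))))

/-- A solution of the SICNN on the time scale `𝕋₀`:  on each interval `[θ_{2k-1}, θ_{2k}]`
the differential equation holds, and at the points `θ_{2k+1}` the difference relation holds. -/
def IsSICNNSol (θ : ℤ → ℝ) {m n : ℕ} (r : ℕ) (a : Fin m → Fin n → ℝ)
    (C : Fin m → Fin n → Fin m → Fin n → ℝ) (f : ℝ → ℝ)
    (L : ℝ → Fin m → Fin n → ℝ) (ζ : ℤ → Fin m → Fin n → ℝ)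
    (x : ℝ → Fin m → Fin n → ℝ) : Prop :=
  (∀ k : ℤ, ∀ t ∈ Set.Icc (θ (2 * k - 1)) (θ (2 * k)), ∀ (i : Fin m) (j : Fin n),
      HasDerivWithinAt (fun τ => x τ i j)
        (-(a i j) * x t i j - interSum r C f (x t) i j + L t i j)
        (Set.Icc (θ (2 * k - 1)) (θ (2 * k))) t) ∧
  (∀ (k : ℤ) (i : Fin m) (j : Fin n),
      x (θ (2 * k + 1)) i j =
        (1 - tdelta θ k * a i j) * x (θ (2 * k)) i j
          - tdelta θ k * interSum r C f (x (θ (2 * k))) i j + tdelta θ k * ζ k i j)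

/-- Membership in the set `𝒟₀`: left-continuous on `ℝ`, continuous off `{s_k}`, with
right limits (discontinuities of the first kind) at the `s_k`, and `‖z‖_∞ ≤ H₀`. -/
def MemD0 (θ : ℤ → ℝ) {m n : ℕ} (H0 : ℝ) (z : ℝ → Fin m → Fin n → ℝ) : Prop :=
  (∀ (s : ℝ) (i : Fin m) (j : Fin n),
      ContinuousWithinAt (fun τ => z τ i j) (Set.Iic s) s) ∧
  (∀ s : ℝ, s ∉ Set.range (sk θ) → ∀ (i : Fin m) (j : Fin n),
      ContinuousAt (fun τ => z τ i j) s) ∧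
  (∀ (k : ℤ) (i : Fin m) (j : Fin n), ∃ l : ℝ,
      Tendsto (fun τ => z τ i j) (nhdsWithin (sk θ k) (Set.Ioi (sk θ k))) (nhds l)) ∧
  (∀ s : ℝ, ‖z s‖ ≤ H0)

/-- The operator `Π` of Lemma 3.1. -/
def PiOp (θ : ℤ → ℝ) {m n : ℕ} (r : ℕ) (a : Fin m → Fin n → ℝ)
    (C : Fin m → Fin n → Fin m → Fin n → ℝ) (f : ℝ → ℝ)
    (L : ℝ → Fin m → Fin n → ℝ) (ζ : ℤ → Fin m → Fin n → ℝ)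
    (z : ℝ → Fin m → Fin n → ℝ) (s : ℝ) (i : Fin m) (j : Fin n) : ℝ :=
  -(∫ τ in Set.Iic s, ufun θ (a i j) s τ * (interSum r C f (z τ) i j - L (psiInv θ τ) i j)) -
    ∑' k : ℤ, (if sk θ k < s then
      ufunR θ (a i j) s (sk θ k) * (interSum r C f (z (sk θ k)) i j - ζ k i j) * tdelta θ k
      else 0)

/-- A pair of (bounded) solutions is proximal. -/
def ProximalPair (θ : ℤ → ℝ) {m n : ℕ} (x x' : ℝ → Fin m → Fin n → ℝ) : Prop :=
  ∀ ε : ℝ, 0 < ε → ∀ E : ℕ, ∃ k₀ : ℤ,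
    ∀ t ∈ Set.Icc (θ (2 * k₀ - 1)) (θ (2 * (k₀ + (E : ℤ)))) ∩ TScale θ,
      ‖x t - x' t‖ < ε

/-- A pair of solutions is frequently `(ε₀, ε₁)`-separated for some `ε₀, ε₁ > 0`:  there are
infinitely many disjoint intervals `J_q ⊆ 𝕋₀`, each of length at least `ε₁`, on which the two
solutions stay more than `ε₀` apart. -/
def FreqSepPair (θ : ℤ → ℝ) {m n : ℕ} (x x' : ℝ → Fin m → Fin n → ℝ) : Prop :=
  ∃ ε₀ : ℝ, 0 < ε₀ ∧ ∃ ε₁ : ℝ, 0 < ε₁ ∧ ∃ J : ℕ → Set ℝ,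
    (∀ q : ℕ, J q ⊆ TScale θ) ∧ (∀ q : ℕ, (J q).OrdConnected) ∧
    (∀ q : ℕ, ε₁ ≤ Metric.diam (J q)) ∧
    Pairwise (Function.onFun Disjoint J) ∧
    ∀ q : ℕ, ∀ t ∈ J q, ε₀ < ‖x t - x' t‖

namespace SICNNAux

open Filter Topology Set

/-- Sum over `Finset.Icc a b` splitting off the top element. -/
lemma sum_Icc_split_top (f : ℤ → ℝ) {a b : ℤ} (h : a ≤ b) :
    ∑ ν ∈ Finset.Icc a b, f ν = (∑ ν ∈ Finset.Icc a (b - 1), f ν) + f b := by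
  have hins : Finset.Icc a b = insert b (Finset.Icc a (b - 1)) := by
    ext z
    simp only [Finset.mem_Icc, Finset.mem_insert]
    omega
  rw [hins, Finset.sum_insert (by simp only [Finset.mem_Icc]; omega), add_comm]

/-- Sum over `Finset.Icc a b` splitting off the bottom element. -/
lemma sum_Icc_split_bot (f : ℤ → ℝ) {a b : ℤ} (h : a ≤ b) :
    ∑ ν ∈ Finset.Icc a b, f ν = f a + ∑ ν ∈ Finset.Icc (a + 1) b, f ν := by
  have hins : Finset.Icc a b = insert a (Finset.Icc (a + 1) b) := by
    ext z
    simp only [Finset.mem_Icc, Finset.mem_insert]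
    omega
  rw [hins, Finset.sum_insert (by simp only [Finset.mem_Icc]; omega)]

lemma tsum_if_pos_eval (g D : ℤ → ℝ) (hg : StrictMono g) (hgneg : g (-1) < 0)
    (hgpos : 0 < g 0) (k : ℤ) (t : ℝ) (h1 : g (k - 1) < t) (h2 : t ≤ g k) :
    (∑' ν : ℤ, if 0 < g ν ∧ g ν < t then D ν else 0) =
      ∑ ν ∈ Finset.Icc (0 : ℤ) (k - 1), D ν := by
  rw [tsum_eq_sum (s := Finset.Icc (0 : ℤ) (k - 1)) ?_]
  · refine Finset.sum_congr rfl fun ν hν => ?_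
    rw [Finset.mem_Icc] at hν
    refine if_pos ⟨lt_of_lt_of_le hgpos (hg.monotone hν.1), lt_of_le_of_lt ?_ h1⟩
    exact hg.monotone hν.2
  · intro ν hν
    rw [Finset.mem_Icc] at hν
    refine if_neg fun hc => ?_
    rcases not_and_or.mp hν with h | h
    · have : g ν ≤ g (-1) := hg.monotone (by omega)
      exact absurd hc.1 (by linarith)
    · have : g k ≤ g ν := hg.monotone (by omega)
      exact absurd hc.2 (by linarith)

lemma tsum_if_neg_eval (g D : ℤ → ℝ) (hg : StrictMono g) (hgneg : g (-1) < 0)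
    (hgpos : 0 < g 0) (k : ℤ) (t : ℝ) (h1 : g (k - 1) < t) (h2 : t ≤ g k) :
    (∑' ν : ℤ, if t ≤ g ν ∧ g ν < 0 then D ν else 0) =
      ∑ ν ∈ Finset.Icc k (-1 : ℤ), D ν := by
  rw [tsum_eq_sum (s := Finset.Icc k (-1 : ℤ)) ?_]
  · refine Finset.sum_congr rfl fun ν hν => ?_
    rw [Finset.mem_Icc] at hν
    refine if_pos ⟨le_trans h2 (hg.monotone hν.1), lt_of_le_of_lt (hg.monotone hν.2) hgneg⟩
  · intro ν hν
    rw [Finset.mem_Icc] at hν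
    refine if_neg fun hc => ?_
    rcases not_and_or.mp hν with h | h
    · have : g ν ≤ g (k - 1) := hg.monotone (by omega)
      exact absurd hc.1 (by linarith)
    · have : g 0 ≤ g ν := hg.monotone (by omega)
      exact absurd hc.2 (by linarith)

/-- The accumulated shift `E_k`. -/
def Ee (θ : ℤ → ℝ) (k : ℤ) : ℝ :=
  if 0 ≤ k then ∑ ν ∈ Finset.Icc (0 : ℤ) (k - 1), tdelta θ ν
  else -∑ ν ∈ Finset.Icc k (-1 : ℤ), tdelta θ ν

section

variable {θ : ℤ → ℝ} (hmono : StrictMono θ) (hneg : θ (-1) < 0) (hpos : 0 < θ 0)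

include hmono in
lemma theta2_strictMono : StrictMono fun ν : ℤ => θ (2 * ν) :=
  fun _ _ h => hmono (by omega)

include hmono hneg hpos in
lemma sk_eq (k : ℤ) : sk θ k = θ (2 * k) - Ee θ k := by
  have hg : StrictMono fun ν : ℤ => θ (2 * ν) := theta2_strictMono hmono
  have hgneg : θ (2 * (-1 : ℤ)) < 0 := lt_trans (hmono (by omega)) hneg
  have hgpos : (0 : ℝ) < θ (2 * (0 : ℤ)) := by norm_num [hpos]
  rw [sk, psi]
  split_ifs with h
  · have hk : 0 ≤ k := by
      by_contra hk
      have : θ (2 * k) ≤ θ (2 * (-1 : ℤ)) := hmono.monotone (by omega)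
      linarith
    rw [tsum_if_pos_eval _ (tdelta θ) hg hgneg hgpos k _ (hg (by omega)) le_rfl,
      Ee, if_pos hk]
  · have hk : ¬ (0 ≤ k) := by
      intro hk
      have : θ (2 * (0 : ℤ)) ≤ θ (2 * k) := hmono.monotone (by omega)
      push_neg at h
      linarith
    rw [tsum_if_neg_eval _ (tdelta θ) hg hgneg hgpos k _ (hg (by omega)) le_rfl,
      Ee, if_neg hk]
    ring

lemma Ee_succ (θ : ℤ → ℝ) (k : ℤ) : Ee θ (k + 1) = Ee θ k + tdelta θ k := by
  rcases le_or_gt 0 k with hk | hk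
  · rw [Ee, if_pos (by omega), Ee, if_pos hk,
      sum_Icc_split_top (tdelta θ) (by omega : (0:ℤ) ≤ k + 1 - 1)]
    norm_num
  · rcases eq_or_lt_of_le (by omega : k + 1 ≤ 0) with h0 | h0
    · have hk1 : k = -1 := by omega
      subst hk1
      rw [Ee, if_pos (by norm_num), Ee, if_neg (by norm_num)]
      norm_num
    · rw [Ee, if_neg (by omega), Ee, if_neg (by omega),
        sum_Icc_split_bot (tdelta θ) (by omega : k ≤ (-1:ℤ))]
      ring

include hmono hneg hpos in
lemma theta_odd (k : ℤ) : θ (2 * k - 1) = sk θ (k - 1) + Ee θ k := by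
  have h1 : sk θ (k - 1) = θ (2 * (k - 1)) - Ee θ (k - 1) := sk_eq hmono hneg hpos (k - 1)
  have h2 : Ee θ k = Ee θ (k - 1) + tdelta θ (k - 1) := by
    have := Ee_succ θ (k - 1)
    simpa using this
  have h3 : tdelta θ (k - 1) = θ (2 * (k - 1) + 1) - θ (2 * (k - 1)) := rfl
  have h4 : (2 * (k - 1) + 1 : ℤ) = 2 * k - 1 := by ring
  rw [h1, h2, h3, h4]
  ring

include hmono hneg hpos in
lemma theta_even (k : ℤ) : θ (2 * k) = sk θ k + Ee θ k := by
  rw [sk_eq hmono hneg hpos k]; ring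

include hmono hneg hpos in
lemma sk_strictMono : StrictMono (sk θ) := by
  apply strictMono_int_of_lt_succ
  intro k
  have h1 : sk θ k = θ (2 * k) - Ee θ k := sk_eq hmono hneg hpos k
  have h2 : sk θ (k + 1) = θ (2 * (k + 1)) - Ee θ (k + 1) := sk_eq hmono hneg hpos (k + 1)
  have h3 := Ee_succ θ k
  have h4 : tdelta θ k = θ (2 * k + 1) - θ (2 * k) := rfl
  have h5 : θ (2 * k + 1) < θ (2 * (k + 1)) := hmono (by omega)
  have h6 : θ (2 * k) < θ (2 * k + 1) := hmono (by omega)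
  rw [h1, h2, h3, h4]
  linarith

include hmono hneg hpos in
lemma sk_zero : sk θ 0 = θ 0 := by
  have := sk_eq hmono hneg hpos 0
  rw [Ee, if_pos le_rfl] at this
  norm_num at this
  simpa using this

include hmono hneg hpos in
lemma sk_neg_one : sk θ (-1) = θ (-1) := by
  have h := sk_eq hmono hneg hpos (-1)
  rw [Ee, if_neg (by norm_num)] at h
  have h2 : ∑ ν ∈ Finset.Icc (-1 : ℤ) (-1 : ℤ), tdelta θ ν = tdelta θ (-1) := by
    rw [Finset.Icc_self, Finset.sum_singleton]
  rw [h2] at h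
  have h3 : tdelta θ (-1) = θ (2 * (-1 : ℤ) + 1) - θ (2 * (-1 : ℤ)) := rfl
  have h4 : (2 * (-1 : ℤ) + 1) = -1 := by norm_num
  rw [h3, h4] at h
  rw [h]
  ring

include hmono hneg hpos in
lemma psiInv_eq (k : ℤ) (s : ℝ) (h1 : sk θ (k - 1) < s) (h2 : s ≤ sk θ k) :
    psiInv θ s = s + Ee θ k := by
  have hg : StrictMono (sk θ) := sk_strictMono hmono hneg hpos
  have hgneg : sk θ (-1) < 0 := by rw [sk_neg_one hmono hneg hpos]; exact hneg
  have hgpos : 0 < sk θ 0 := by rw [sk_zero hmono hneg hpos]; exact hpos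
  rw [psiInv]
  split_ifs with h
  · have hk : 0 ≤ k := by
      by_contra hk
      have : sk θ k ≤ sk θ (-1) := hg.monotone (by omega)
      linarith
    rw [tsum_if_pos_eval _ (tdelta θ) hg hgneg hgpos k s h1 h2, Ee, if_pos hk]
  · push_neg at h
    rcases lt_or_ge k 0 with hk | hk
    · rw [tsum_if_neg_eval _ (tdelta θ) hg hgneg hgpos k s h1 h2, Ee, if_neg (by omega)]
      ring
    · have hk0 : k = 0 := by
        by_contra hk0
        have : sk θ 0 ≤ sk θ (k - 1) := hg.monotone (by omega)
        linarith
      subst hk0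
      rw [tsum_if_neg_eval _ (tdelta θ) hg hgneg hgpos 0 s h1 h2, Ee, if_pos le_rfl]
      norm_num

end

lemma tendsto_add_const_nhdsWithin (c a : ℝ) {S T : Set ℝ}
    (h : ∀ τ ∈ S, τ + c ∈ T) :
    Filter.Tendsto (fun τ => τ + c) (nhdsWithin a S) (nhdsWithin (a + c) T) := by
  rw [tendsto_nhdsWithin_iff]
  constructor
  · exact ((continuous_id.add continuous_const).tendsto a).mono_left nhdsWithin_le_nhds
  · exact eventually_mem_nhdsWithin.mono h

lemma hasDerivWithinAt_comp_add {F : ℝ → ℝ} {d c t : ℝ} {S T : Set ℝ}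
    (hF : HasDerivWithinAt F d T (t + c)) (h : ∀ τ ∈ S, τ + c ∈ T) :
    HasDerivWithinAt (fun τ => F (τ + c)) d S t := by
  have hg : HasDerivWithinAt (fun τ : ℝ => τ + c) 1 S t :=
    (hasDerivWithinAt_id t S).add_const c
  have := HasDerivWithinAt.comp (h := fun τ : ℝ => τ + c) (h₂ := F) t hF hg h
  simpa [Function.comp_def] using this

end SICNNAux

namespace SICNNAux

open Filter Topology Set

lemma exists_Ioc {θ : ℤ → ℝ} {ω : ℝ} {p : ℕ} (hts : TimeScaleHyp θ ω p) (s : ℝ) :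
    ∃ k : ℤ, sk θ (k - 1) < s ∧ s ≤ sk θ k := by
  have hmono := hts.mono
  have hneg := hts.theta_neg
  have hpos := hts.theta_pos
  have hskm : StrictMono (sk θ) := sk_strictMono hmono hneg hpos
  have hdiff : ∀ k : ℤ, sk θ k = sk θ (k - 1) + (θ (2 * k) - θ (2 * k - 1)) := by
    intro k
    have h1 := sk_eq hmono hneg hpos k
    have h2 := sk_eq hmono hneg hpos (k - 1)
    have h3 : Ee θ k = Ee θ (k - 1) + tdelta θ (k - 1) := by simpa using Ee_succ θ (k - 1)
    have h4 : tdelta θ (k - 1) = θ (2 * k - 1) - θ (2 * (k - 1)) := by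
      have e : (2 * (k - 1) + 1 : ℤ) = 2 * k - 1 := by ring
      rw [tdelta, e]
    rw [h1, h2, h3, h4]; ring
  have hup : ∀ N : ℕ, sk θ (N : ℤ) =
      θ (-1) + ∑ k ∈ Finset.range (N + 1), (θ (2 * (k : ℤ)) - θ (2 * (k : ℤ) - 1)) := by
    intro N
    induction N with
    | zero =>
      have h0 : sk θ ((0 : ℕ) : ℤ) = θ 0 := by
        rw [Nat.cast_zero, sk_zero hmono hneg hpos]
      rw [h0, Finset.sum_range_one]
      norm_num
    | succ N ih =>
      have hstep := hdiff ((N : ℤ) + 1)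
      have e : ((N : ℤ) + 1 - 1) = (N : ℤ) := by ring
      rw [e] at hstep
      rw [Finset.sum_range_succ, ← add_assoc, ← ih]
      push_cast
      rw [hstep]
  have hupT : Tendsto (fun N : ℕ => sk θ (N : ℤ)) atTop atTop := by
    have h1 : Tendsto (fun N : ℕ =>
        ∑ k ∈ Finset.range (N + 1), (θ (2 * (k : ℤ)) - θ (2 * (k : ℤ) - 1))) atTop atTop :=
      hts.sum_top.comp (tendsto_add_atTop_nat 1)
    have h2 := tendsto_atTop_add_const_left atTop (θ (-1)) h1
    exact h2.congr fun N => (hup N).symm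
  have hlow : ∀ N : ℕ, sk θ (-1 - (N : ℤ)) = θ (-1) + (θ 0 - θ (-1)) -
      ∑ k ∈ Finset.range (N + 1), (θ (2 * (-(k : ℤ))) - θ (2 * (-(k : ℤ)) - 1)) := by
    intro N
    induction N with
    | zero =>
      rw [Finset.sum_range_one]
      norm_num [sk_neg_one hmono hneg hpos]
    | succ N ih =>
      have hstep := hdiff (-1 - (N : ℤ))
      rw [Finset.sum_range_succ]
      push_cast
      have e1 : (2 * -((N : ℤ) + 1) : ℤ) = 2 * (-1 - (N : ℤ)) := by ring
      have e2 : (-1 - ((N : ℤ) + 1) : ℤ) = (-1 - (N : ℤ)) - 1 := by ring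
      rw [e1, e2]
      linarith [hstep, ih]
  have hlowT : Tendsto (fun N : ℕ => sk θ (-1 - (N : ℤ))) atTop atBot := by
    have h1 := hts.sum_bot.comp (tendsto_add_atTop_nat 1)
    have h2 : Tendsto (fun N : ℕ =>
        -(∑ k ∈ Finset.range (N + 1), (θ (2 * (-(k : ℤ))) - θ (2 * (-(k : ℤ)) - 1))))
        atTop atBot := tendsto_neg_atTop_atBot.comp h1
    have h3 := tendsto_atBot_add_const_left atTop (θ (-1) + (θ 0 - θ (-1))) h2
    exact h3.congr fun N => by rw [hlow N]; ring
  obtain ⟨N1, hN1⟩ := (hupT.eventually_ge_atTop s).exists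
  obtain ⟨N2, hN2⟩ := (hlowT.eventually_le_atBot (s - 1)).exists
  have hbd : ∀ z : ℤ, s ≤ sk θ z → -1 - (N2 : ℤ) ≤ z := by
    intro z hz
    by_contra hc
    push_neg at hc
    have : sk θ z < sk θ (-1 - (N2 : ℤ)) := hskm (by omega)
    linarith
  obtain ⟨lb, hlb, hmin⟩ := Int.exists_least_of_bdd ⟨-1 - (N2 : ℤ), hbd⟩ ⟨(N1 : ℤ), hN1⟩
  refine ⟨lb, ?_, hlb⟩
  by_contra hcon
  push_neg at hcon
  have := hmin (lb - 1) hcon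
  omega

end SICNNAux
/-- A (rd-continuous) function `x` on `𝕋₀` is a solution of the SICNN on
the time scale if and only if `y(s) = x(ψ⁻¹(s))` is a solution of the associated impulsive
system on `ℝ`. -/
theorem isSICNNSol_iff_isImpSol_comp_psiInv
    (θ : ℤ → ℝ) (ω : ℝ) (p : ℕ) (hts : TimeScaleHyp θ ω p) 
    (m n r : ℕ) (a : Fin m → Fin n → ℝ) (ha : ∀ i j, 0 < a i j)
    (C : Fin m → Fin n → Fin m → Fin n → ℝ) (hCpos : ∀ i j i' j', 0 ≤ C i j i' j')
    (f : ℝ → ℝ) (hf : Continuous f)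
    (ζ : ℤ → Fin m → Fin n → ℝ)
    (L : ℝ → Fin m → Fin n → ℝ)
    (hL : ∀ k : ℤ, ∀ t ∈ Set.Icc (θ (2 * k - 1)) (θ (2 * k)), ∀ i j, L t i j = ζ k i j)
    (x : ℝ → Fin m → Fin n → ℝ)
    (hx : ∀ k : ℤ, ContinuousOn x (Set.Icc (θ (2 * k - 1)) (θ (2 * k)))) :
    IsSICNNSol θ r a C f L ζ x ↔
      IsImpSol θ r a C f L ζ (fun s => x (psiInv θ s)) := by
  classical
  have hmono := hts.mono
  have hneg := hts.theta_neg
  have hpos := hts.theta_pos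
  have hPI : ∀ k : ℤ, ∀ s ∈ Set.Ioc (sk θ (k - 1)) (sk θ k),
      psiInv θ s = s + SICNNAux.Ee θ k :=
    fun k s hs => SICNNAux.psiInv_eq hmono hneg hpos k s hs.1 hs.2
  have hODD : ∀ k : ℤ, θ (2 * k - 1) = sk θ (k - 1) + SICNNAux.Ee θ k :=
    SICNNAux.theta_odd hmono hneg hpos
  have hEVEN : ∀ k : ℤ, θ (2 * k) = sk θ k + SICNNAux.Ee θ k :=
    SICNNAux.theta_even hmono hneg hpos
  have hskm : StrictMono (sk θ) := SICNNAux.sk_strictMono hmono hneg hpos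
  have hsklt : ∀ k : ℤ, sk θ (k - 1) < sk θ k := fun k => hskm (by omega)
  have hAB : ∀ k : ℤ, θ (2 * k - 1) < θ (2 * k) := fun k => hmono (by omega)
  have hmapsIcc : ∀ k : ℤ, ∀ τ ∈ Set.Ioc (sk θ (k - 1)) (sk θ k),
      τ + SICNNAux.Ee θ k ∈ Set.Icc (θ (2 * k - 1)) (θ (2 * k)) := by
    intro k τ hτ
    rw [hODD k, hEVEN k]
    exact ⟨by linarith [hτ.1], by linarith [hτ.2]⟩
  have hxc : ∀ (k : ℤ), ∀ u ∈ Set.Icc (θ (2 * k - 1)) (θ (2 * k)), ∀ (i : Fin m) (j : Fin n),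
      ContinuousWithinAt (fun t => x t i j) (Set.Icc (θ (2 * k - 1)) (θ (2 * k))) u := by
    intro k u hu i j
    have h1 : Continuous fun v : Fin m → Fin n → ℝ => v i j :=
      (continuous_apply j).comp (continuous_apply i)
    have h2 := h1.continuousAt.comp_continuousWithinAt ((hx k).continuousWithinAt hu)
    simpa [Function.comp_def] using h2
  have hright : ∀ (k : ℤ) (i : Fin m) (j : Fin n),
      Filter.Tendsto (fun τ => x (psiInv θ τ) i j)
        (nhdsWithin (sk θ k) (Set.Ioi (sk θ k))) (nhds (x (θ (2 * k + 1)) i j)) := by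
    intro k i j
    have e1 : (2 * (k + 1) - 1 : ℤ) = 2 * k + 1 := by ring
    have e2 : ((k + 1 : ℤ) - 1) = k := by ring
    have hk1 : θ (2 * k + 1) = sk θ k + SICNNAux.Ee θ (k + 1) := by
      have h := hODD (k + 1); rw [e1, e2] at h; exact h
    have hsk1 : sk θ k < sk θ (k + 1) := hskm (by omega)
    have hcw : ContinuousWithinAt (fun t => x t i j)
        (Set.Icc (θ (2 * (k + 1) - 1)) (θ (2 * (k + 1)))) (θ (2 * (k + 1) - 1)) :=
      hxc (k + 1) _ ⟨le_rfl, (hAB (k + 1)).le⟩ i j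
    have hmaps : ∀ τ ∈ Set.Ioc (sk θ k) (sk θ (k + 1)),
        τ + SICNNAux.Ee θ (k + 1) ∈ Set.Icc (θ (2 * (k + 1) - 1)) (θ (2 * (k + 1))) := by
      intro τ hτ
      refine hmapsIcc (k + 1) τ ?_
      rw [e2]; exact hτ
    have htr := SICNNAux.tendsto_add_const_nhdsWithin (SICNNAux.Ee θ (k + 1)) (sk θ k) hmaps
    have hend : sk θ k + SICNNAux.Ee θ (k + 1) = θ (2 * (k + 1) - 1) := by
      rw [e1]; exact hk1.symm
    rw [hend] at htr
    have hT : Filter.Tendsto (fun τ => x (τ + SICNNAux.Ee θ (k + 1)) i j)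
        (nhdsWithin (sk θ k) (Set.Ioc (sk θ k) (sk θ (k + 1))))
        (nhds (x (θ (2 * (k + 1) - 1)) i j)) := hcw.tendsto.comp htr
    have hEq : ∀ᶠ τ in nhdsWithin (sk θ k) (Set.Ioc (sk θ k) (sk θ (k + 1))),
        x (τ + SICNNAux.Ee θ (k + 1)) i j = x (psiInv θ τ) i j := by
      refine eventually_mem_nhdsWithin.mono fun τ hτ => ?_
      rw [hPI (k + 1) τ (by rw [e2]; exact hτ)]
    have hT2 := Filter.Tendsto.congr' hEq hT
    have hle : nhdsWithin (sk θ k) (Set.Ioi (sk θ k)) ≤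
        nhdsWithin (sk θ k) (Set.Ioc (sk θ k) (sk θ (k + 1))) :=
      nhdsWithin_le_iff.mpr (Ioc_mem_nhdsGT_of_mem ⟨le_rfl, hsk1⟩)
    have hfin := hT2.mono_left hle
    rw [e1] at hfin
    exact hfin
  have hyat : ∀ k : ℤ, psiInv θ (sk θ k) = θ (2 * k) := by
    intro k
    rw [hPI k (sk θ k) ⟨hsklt k, le_rfl⟩]
    exact (hEVEN k).symm
  constructor
  · rintro ⟨Hde, Hdi⟩
    refine ⟨?_, ?_, ?_⟩
    · intro k s hs i j
      have hD := Hde k (s + SICNNAux.Ee θ k) (hmapsIcc k s hs) i j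
      have hcomp := SICNNAux.hasDerivWithinAt_comp_add hD (fun τ hτ => hmapsIcc k τ hτ)
      have hgoalEq : psiInv θ s = s + SICNNAux.Ee θ k := hPI k s hs
      simp only [hgoalEq]
      exact hcomp.congr (fun τ hτ => by rw [hPI k τ hτ]) (by rw [hgoalEq])
    · intro s i j
      obtain ⟨k, hk1, hk2⟩ := SICNNAux.exists_Ioc hts s
      have hin : s ∈ Set.Ioc (sk θ (k - 1)) (sk θ k) := ⟨hk1, hk2⟩
      have hcw : ContinuousWithinAt (fun t => x t i j)
          (Set.Icc (θ (2 * k - 1)) (θ (2 * k))) (s + SICNNAux.Ee θ k) :=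
        hxc k _ (hmapsIcc k s hin) i j
      have hmaps' : ∀ τ ∈ Set.Ioc (sk θ (k - 1)) s,
          τ + SICNNAux.Ee θ k ∈ Set.Icc (θ (2 * k - 1)) (θ (2 * k)) :=
        fun τ hτ => hmapsIcc k τ ⟨hτ.1, hτ.2.trans hk2⟩
      have cA : ContinuousWithinAt (fun τ => x (τ + SICNNAux.Ee θ k) i j)
          (Set.Ioc (sk θ (k - 1)) s) s :=
        hcw.tendsto.comp (SICNNAux.tendsto_add_const_nhdsWithin _ _ hmaps')
      have cB : ContinuousWithinAt (fun τ => x (psiInv θ τ) i j)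
          (Set.Ioc (sk θ (k - 1)) s) s :=
        cA.congr (fun τ hτ => by rw [hPI k τ ⟨hτ.1, hτ.2.trans hk2⟩]) (by rw [hPI k s hin])
      refine cB.mono_of_mem_nhdsWithin ?_
      have h1 : Set.Ioi (sk θ (k - 1)) ∩ Set.Iic s ∈ nhdsWithin s (Set.Iic s) :=
        Filter.inter_mem (mem_nhdsWithin_of_mem_nhds (Ioi_mem_nhds hk1)) self_mem_nhdsWithin
      rwa [Set.Ioi_inter_Iic] at h1
    · intro k i j
      have h1 := hright k i j
      have e : x (psiInv θ (sk θ k)) = x (θ (2 * k)) := by rw [hyat k]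
      have hv : x (θ (2 * k + 1)) i j = x (psiInv θ (sk θ k)) i j +
          (-(tdelta θ k) * a i j * x (psiInv θ (sk θ k)) i j -
            tdelta θ k * interSum r C f (x (psiInv θ (sk θ k))) i j +
            tdelta θ k * ζ k i j) := by
        rw [e, Hdi k i j]; ring
      exact hv ▸ h1
  · rintro ⟨Hde, -, Hjump⟩
    constructor
    · intro k t htIcc i j
      have hPIτ : ∀ τ ∈ Set.Ioc (θ (2 * k - 1)) (θ (2 * k)),
          τ - SICNNAux.Ee θ k ∈ Set.Ioc (sk θ (k - 1)) (sk θ k) := by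
        intro τ hτ
        rw [hODD k] at hτ
        rw [hEVEN k] at hτ
        exact ⟨by linarith [hτ.1], by linarith [hτ.2]⟩
      have htrans : ∀ u ∈ Set.Ioc (θ (2 * k - 1)) (θ (2 * k)),
          HasDerivWithinAt (fun τ => x τ i j)
            (-(a i j) * x u i j - interSum r C f (x u) i j + L u i j)
            (Set.Ioc (θ (2 * k - 1)) (θ (2 * k))) u := by
        intro u hu
        have hs := hPIτ u hu
        have hD := Hde k _ hs i j
        have hPIu : psiInv θ (u - SICNNAux.Ee θ k) = u := by
          rw [hPI k _ hs]; ring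
        simp only [hPIu] at hD
        rw [sub_eq_add_neg] at hD
        have hmaps'' : ∀ τ ∈ Set.Ioc (θ (2 * k - 1)) (θ (2 * k)),
            τ + -SICNNAux.Ee θ k ∈ Set.Ioc (sk θ (k - 1)) (sk θ k) := by
          intro τ hτ
          rw [← sub_eq_add_neg]
          exact hPIτ τ hτ
        have hcomp := SICNNAux.hasDerivWithinAt_comp_add hD hmaps''
        refine hcomp.congr (fun τ hτ => ?_) ?_
        · rw [← sub_eq_add_neg, hPI k _ (hPIτ τ hτ)]
          norm_num
        · rw [← sub_eq_add_neg, hPIu]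
      rcases eq_or_lt_of_le htIcc.1 with heq | hlt'
      · subst heq
        have hABlt : θ (2 * k - 1) < θ (2 * k) := hAB k
        have hmem : θ (2 * k - 1) ∈ Set.Icc (θ (2 * k - 1)) (θ (2 * k)) := ⟨le_rfl, hABlt.le⟩
        have hDD : ∀ u ∈ Set.Ioo (θ (2 * k - 1)) (θ (2 * k)),
            HasDerivAt (fun τ => x τ i j)
              (-(a i j) * x u i j - interSum r C f (x u) i j + L u i j) u := by
          intro u hu
          exact (htrans u (Set.Ioo_subset_Ioc_self hu)).hasDerivAt (Ioc_mem_nhds hu.1 hu.2)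
        set g₀ : ℝ → ℝ :=
          fun u => -(a i j) * x u i j - interSum r C f (x u) i j + ζ k i j with hg₀
        have hg₀L : ∀ u ∈ Set.Icc (θ (2 * k - 1)) (θ (2 * k)),
            -(a i j) * x u i j - interSum r C f (x u) i j + L u i j = g₀ u := by
          intro u hu
          rw [hg₀, hL k u hu i j]
        have hISc : ContinuousWithinAt (fun u => interSum r C f (x u) i j)
            (Set.Icc (θ (2 * k - 1)) (θ (2 * k))) (θ (2 * k - 1)) := by
          simp only [interSum]
          exact tendsto_finset_sum _ fun q _ =>
            ((continuousWithinAt_const.mul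
              (hf.continuousAt.comp_continuousWithinAt (hxc k _ hmem q.1 q.2))).mul
              (hxc k _ hmem i j))
        have hg₀c : ContinuousWithinAt g₀
            (Set.Icc (θ (2 * k - 1)) (θ (2 * k))) (θ (2 * k - 1)) :=
          ((continuousWithinAt_const.mul (hxc k _ hmem i j)).sub hISc).add
            continuousWithinAt_const
        have f_diff : DifferentiableOn ℝ (fun u => x u i j)
            (Set.Ioo (θ (2 * k - 1)) (θ (2 * k))) :=
          fun u hu => ((hDD u hu).differentiableAt).differentiableWithinAt
        have f_lim : ContinuousWithinAt (fun u => x u i j)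
            (Set.Ioo (θ (2 * k - 1)) (θ (2 * k))) (θ (2 * k - 1)) :=
          (hxc k _ hmem i j).mono Set.Ioo_subset_Icc_self
        have f_lim' : Filter.Tendsto (deriv fun u => x u i j)
            (nhdsWithin (θ (2 * k - 1)) (Set.Ioi (θ (2 * k - 1))))
            (nhds (g₀ (θ (2 * k - 1)))) := by
          have hev : ∀ᶠ u in nhdsWithin (θ (2 * k - 1)) (Set.Ioi (θ (2 * k - 1))),
              g₀ u = deriv (fun τ => x τ i j) u := by
            filter_upwards [Ioo_mem_nhdsGT hABlt] with u hu
            rw [(hDD u hu).deriv]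
            exact (hg₀L u (Set.Ioo_subset_Icc_self hu)).symm
          have hg₀t : Filter.Tendsto g₀
              (nhdsWithin (θ (2 * k - 1)) (Set.Ioi (θ (2 * k - 1))))
              (nhds (g₀ (θ (2 * k - 1)))) :=
            hg₀c.tendsto.mono_left (nhdsWithin_le_iff.mpr (Icc_mem_nhdsGT hABlt))
          exact Filter.Tendsto.congr' hev hg₀t
        have hendpt := hasDerivWithinAt_Ici_of_tendsto_deriv f_diff f_lim
          (Ioo_mem_nhdsGT hABlt) f_lim'
        rw [hg₀L (θ (2 * k - 1)) hmem]
        exact hendpt.mono Set.Icc_subset_Ici_self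
      · have hD := htrans t ⟨hlt', htIcc.2⟩
        refine hD.mono_of_mem_nhdsWithin ?_
        rw [mem_nhdsWithin]
        exact ⟨Set.Ioi (θ (2 * k - 1)), isOpen_Ioi, hlt', fun z hz => ⟨hz.1, hz.2.2⟩⟩
    · intro k i j
      have h1 := hright k i j
      have h2 := Hjump k i j
      have huniq := tendsto_nhds_unique h1 h2
      simp only [hyat k] at huniq
      rw [huniq]
      ring
end
end

section
/- Let d̄ > 0 and δ > 0, and let α = λ − d̄ − (p/ψ(ω)) ln(1 + δd̄). Then for any real numbers a₀ < b₀, (1 + δd̄)^{i((a₀,b₀))} e^{d̄(b₀−a₀)} ≤ (1 + δd̄)^p e^{(λ−α)(b₀−a₀)}, where i((a₀,b₀)) denotes the number of terms of the sequence {s_k}_{k∈ℤ} lying in the interval (a₀, b₀). -/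
open Filter Topology MeasureTheory

noncomputable section

/-- With `α = λ - d̄ - (p/ψ(ω)) ln(1+δd̄)`, for any reals `a₀ < b₀`,
`(1+δd̄)^{i((a₀,b₀))} e^{d̄(b₀-a₀)} ≤ (1+δd̄)^p e^{(λ-α)(b₀-a₀)}`. -/
theorem pow_count_mul_exp_le
    (θ : ℤ → ℝ) (ω : ℝ) (p : ℕ) (hts : TimeScaleHyp θ ω p)
    (hmono : StrictMono (sk θ))
    (hper : ∀ k : ℤ, sk θ (k + (p : ℤ)) = sk θ k + psi θ ω)
    (lam db dl : ℝ) (hlam : 0 < lam) (hdb : 0 < db) (hdl : 0 < dl)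
    (α : ℝ) (hα : α = lam - db - (p : ℝ) / psi θ ω * Real.log (1 + dl * db))
    (a₀ b₀ : ℝ) (hab : a₀ < b₀) :
    (1 + dl * db) ^ {k : ℤ | sk θ k ∈ Set.Ioo a₀ b₀}.ncard * Real.exp (db * (b₀ - a₀)) ≤
      (1 + dl * db) ^ p * Real.exp ((lam - α) * (b₀ - a₀)) := by
    classical
  have hψω : 0 < psi θ ω := by
    have hp : (0:ℤ) < (p:ℤ) := by exact_mod_cast hts.p_pos
    have h2 : sk θ 0 < sk θ (0 + (p : ℤ)) := hmono (by linarith)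
    have h1 := hper 0
    rw [h1] at h2; linarith
  have hshift : ∀ (k : ℤ) (m : ℕ), sk θ (k + (m : ℤ) * (p : ℤ)) = sk θ k + (m : ℝ) * psi θ ω := by
    intro k m
    induction m with
    | zero => simp
    | succ m ih =>
      have e : k + ((m + 1 : ℕ) : ℤ) * (p : ℤ) = (k + (m : ℤ) * (p : ℤ)) + (p : ℤ) := by
        push_cast; ring
      rw [e, hper, ih]; push_cast; ring
  set L := b₀ - a₀ with hLdef
  have hL0 : 0 < L := by simp [hLdef]; linarith
  set n : ℕ := ⌈L / psi θ ω⌉₊ with hn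
  set S := {k : ℤ | sk θ k ∈ Set.Ioo a₀ b₀} with hSdef
  have hcard : (S.ncard : ℝ) ≤ (p : ℝ) + (p : ℝ) * L / psi θ ω := by
    have hnψ : L ≤ (n : ℝ) * psi θ ω := by
      have := Nat.le_ceil (L / psi θ ω)
      calc L = L / psi θ ω * psi θ ω := by field_simp
        _ ≤ (n : ℝ) * psi θ ω := by
            apply mul_le_mul_of_nonneg_right this hψω.le
    have key : (S.ncard : ℝ) ≤ ((p * n : ℕ) : ℝ) := by
      by_cases hfin : S.Finite
      · rcases S.eq_empty_or_nonempty with he | hne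
        · simp [he]; positivity
        · have hne' : hfin.toFinset.Nonempty := by
            simpa [Set.Finite.toFinset_nonempty] using hne
          set kmin := hfin.toFinset.min' hne' with hkmin
          have hkminS : kmin ∈ S := by
            have := hfin.toFinset.min'_mem hne'
            simpa using this
          have hsub : S ⊆ ↑(Finset.Ico kmin (kmin + (p * n : ℕ))) := by
            intro k hk
            simp only [Finset.coe_Ico, Set.mem_Ico]
            constructor
            · exact hfin.toFinset.min'_le k (by simpa using hk)
            · by_contra hge
              push_neg at hge
              have h1 : sk θ (kmin + ((p * n : ℕ) : ℤ)) ≤ sk θ k := hmono.monotone hge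
              have h2 : sk θ (kmin + ((p * n : ℕ) : ℤ)) = sk θ kmin + (n : ℝ) * psi θ ω := by
                have e : kmin + ((p * n : ℕ) : ℤ) = kmin + ((n : ℤ)) * (p : ℤ) := by push_cast; ring
                rw [e, hshift kmin n]
              have ha : a₀ < sk θ kmin := hkminS.1
              have hb : sk θ k < b₀ := hk.2
              have : b₀ ≤ sk θ kmin + (n : ℝ) * psi θ ω := by
                have : a₀ + L ≤ a₀ + (n : ℝ) * psi θ ω := by linarith
                simp [hLdef] at this ⊢; linarith
              linarith
          have := Set.ncard_le_ncard hsub (Finset.finite_toSet _)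
          rw [Set.ncard_coe_finset] at this
          have hc : (Finset.Ico kmin (kmin + ((p * n : ℕ) : ℤ))).card = p * n := by
            rw [Int.card_Ico]; omega
          rw [hc] at this
          exact_mod_cast this
      · rw [Set.Infinite.ncard hfin]; exact_mod_cast Nat.zero_le _
    have hceil : (n : ℝ) < L / psi θ ω + 1 := by
      apply Nat.ceil_lt_add_one
      positivity
    have : ((p * n : ℕ) : ℝ) ≤ (p : ℝ) + (p : ℝ) * L / psi θ ω := by
      push_cast
      have hp0 : (0:ℝ) ≤ (p:ℝ) := by positivity
      have := mul_le_mul_of_nonneg_left hceil.le hp0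
      calc (p : ℝ) * (n : ℝ) ≤ (p : ℝ) * (L / psi θ ω + 1) := this
        _ = (p : ℝ) + (p : ℝ) * L / psi θ ω := by ring
    linarith
  -- final exponential manipulation
  have hx0 : 0 < dl * db := mul_pos hdl hdb
  have h1x : (0:ℝ) < 1 + dl * db := by linarith
  have hlog : 0 < Real.log (1 + dl * db) := Real.log_pos (by linarith)
  have hexp : ∀ m : ℕ, (1 + dl * db) ^ m = Real.exp ((m : ℝ) * Real.log (1 + dl * db)) := by
    intro m
    rw [Real.exp_nat_mul, Real.exp_log h1x]
  rw [hexp, hexp, ← Real.exp_add, ← Real.exp_add, Real.exp_le_exp]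
  have hlamα : lam - α = db + (p : ℝ) / psi θ ω * Real.log (1 + dl * db) := by
    rw [hα]; ring
  rw [hlamα]
  have hmul := mul_le_mul_of_nonneg_right hcard hlog.le
  have hd : (p : ℝ) * L / psi θ ω * Real.log (1 + dl * db)
      = (p : ℝ) / psi θ ω * Real.log (1 + dl * db) * L := by ring
  nlinarith [hmul, hd]
end
end

section
/- Under conditions (C1)–(C5), if a pair of sequences ζ, ζ̃ (each satisfying ζ_{k+1} = F(ζ_k), ζ̃_{k+1} = F(ζ̃_k)) is frequently separated, i.e., limsup_{k→∞} ‖ζ_k − ζ̃_k‖ > 0, then the pair of bounded solutions φ_ζ(t), φ_ζ̃(t) of the SICNN is frequently (ε₀, ε₁)-separated for some positive numbers ε₀ and ε₁: there exist infinitely many disjoint intervals J_q ⊂ 𝕋₀, q ∈ ℕ, each of length no less than ε₁, such that ‖φ_ζ(t) − φ_ζ̃(t)‖ > ε₀ for each t from these intervals. -/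
open Filter Topology MeasureTheory

noncomputable section

section FreqSepHelpers

private lemma comp_subset_TScale (θ : ℤ → ℝ) (k : ℤ) :
    Set.Icc (θ (2*k-1)) (θ (2*k)) ⊆ TScale θ :=
  Set.subset_iUnion (fun k : ℤ => Set.Icc (θ (2*k-1)) (θ (2*k))) k

private lemma single_comp {θ : ℤ → ℝ} (hmono : StrictMono θ) {u v : ℝ} (huv : u ≤ v)
    (hsub : Set.Icc u v ⊆ TScale θ) : ∃ k : ℤ, θ (2*k-1) ≤ u ∧ v ≤ θ (2*k) := by
  have hu : u ∈ TScale θ := hsub ⟨le_refl u, huv⟩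
  have hv : v ∈ TScale θ := hsub ⟨huv, le_refl v⟩
  obtain ⟨k1, hk1⟩ := Set.mem_iUnion.mp hu
  obtain ⟨k2, hk2⟩ := Set.mem_iUnion.mp hv
  rcases lt_trichotomy k1 k2 with hlt | heq | hgt
  · exfalso
    set g : ℝ := (θ (2*k1) + θ (2*k1+1))/2 with hg
    have h1 : θ (2*k1) < θ (2*k1+1) := hmono (by omega)
    have hg1 : θ (2*k1) < g := by rw [hg]; linarith
    have hg2 : g < θ (2*k1+1) := by rw [hg]; linarith
    have hgmem : g ∈ Set.Icc u v := by
      constructor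
      · exact le_trans hk1.2 hg1.le
      · exact le_trans hg2.le (le_trans (hmono.monotone (by omega : 2*k1+1 ≤ 2*k2-1)) hk2.1)
    obtain ⟨j, hj⟩ := Set.mem_iUnion.mp (hsub hgmem)
    rcases le_or_gt j k1 with hj1 | hj2
    · have : θ (2*j) ≤ θ (2*k1) := hmono.monotone (by omega)
      linarith [hj.2]
    · have : θ (2*k1+1) ≤ θ (2*j-1) := hmono.monotone (by omega)
      linarith [hj.1]
  · exact ⟨k1, hk1.1, heq ▸ hk2.2⟩
  · have h1 : θ (2*k2) ≤ θ (2*k1 - 1) := hmono.monotone (by omega)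
    have huv' : u = v := le_antisymm huv (by linarith [hk1.1, hk2.2])
    subst huv'
    exact ⟨k2, hk2.1, hk2.2⟩

private lemma gaps_lb {θ : ℤ → ℝ} (hmono : StrictMono θ) {dmin : ℝ}
    (hδ : ∀ k : ℤ, dmin ≤ tdelta θ k) :
    ∀ (d : ℕ), ∀ k : ℤ, 1 ≤ d → θ (2*k) + d*dmin ≤ θ (2*(k+d) - 1) := by
  intro d
  induction d with
  | zero => intro k h; omega
  | succ d ih =>
    intro k _
    rcases Nat.eq_zero_or_pos d with h1 | h1
    · subst h1
      have h3 := hδ k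
      unfold tdelta at h3
      have h4 : (2*(k+((0:ℕ)+1:ℕ)) - 1 : ℤ) = 2*k+1 := by push_cast; ring
      rw [h4]
      push_cast
      linarith
    · have step := ih k h1
      have h2 : θ (2*(k+d) - 1) ≤ θ (2*(k+d)) := hmono.monotone (by omega)
      have h3 := hδ (k + d)
      unfold tdelta at h3
      have h4 : (2*(k+(d+1:ℕ)) - 1 : ℤ) = 2*(k+(d:ℤ))+1 := by push_cast; ring
      rw [h4]
      push_cast at step ⊢
      linarith

private lemma tdelta_reduce {θ : ℤ → ℝ} {p : ℕ} (hp : 0 < p)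
    (hper : ∀ k : ℤ, tdelta θ (k + (p:ℤ)) = tdelta θ k) :
    ∀ k : ℤ, ∃ ν : ℕ, ν < p ∧ tdelta θ k = tdelta θ (ν:ℤ) := by
  have hmul : ∀ (j : ℤ) (k : ℤ), tdelta θ (k + j*(p:ℤ)) = tdelta θ k := by
    intro j
    induction j using Int.induction_on with
    | zero => intro k; norm_num
    | succ j ih => intro k
                   have hh := hper (k + j*(p:ℤ))
                   rw [ih] at hh
                   rw [← hh]; ring_nf
    | pred j ih => intro k
                   have hh := hper (k + (-(j:ℤ)-1)*(p:ℤ))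
                   have h2 : k + (-(j:ℤ)-1)*(p:ℤ) + (p:ℤ) = k + (-(j:ℤ))*(p:ℤ) := by ring
                   rw [h2, ih] at hh
                   exact hh.symm
  intro k
  have hppos : (0:ℤ) < (p:ℤ) := by exact_mod_cast hp
  refine ⟨(k % (p:ℤ)).toNat, ?_, ?_⟩
  · have h1 : k % (p:ℤ) < (p:ℤ) := Int.emod_lt_of_pos k hppos
    omega
  · have h0 : (0:ℤ) ≤ k % (p:ℤ) := Int.emod_nonneg k (by omega)
    have htn : ((k % (p:ℤ)).toNat : ℤ) = k % (p:ℤ) := Int.toNat_of_nonneg h0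
    rw [htn]
    have hdiv : k = k % (p:ℤ) + (k / (p:ℤ)) * (p:ℤ) := by
      have h := Int.emod_add_mul_ediv k (p:ℤ); linarith [h]
    calc tdelta θ k = tdelta θ (k % (p:ℤ) + (k / (p:ℤ)) * (p:ℤ)) := by rw [← hdiv]
    _ = tdelta θ (k % (p:ℤ)) := hmul _ _

private lemma coord_le {m n : ℕ} (v : Fin m → Fin n → ℝ) (i : Fin m) (j : Fin n) :
    |v i j| ≤ ‖v‖ := by
  have h1 : ‖v i‖ ≤ ‖v‖ := norm_le_pi_norm v i
  have h2 : ‖v i j‖ ≤ ‖v i‖ := norm_le_pi_norm (v i) j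
  rw [Real.norm_eq_abs] at h2
  linarith

private lemma exists_coord {m n : ℕ} (v : Fin m → Fin n → ℝ) {Cc : ℝ} (h0 : 0 < Cc)
    (h : Cc ≤ ‖v‖) : ∃ i j, Cc ≤ |v i j| := by
  by_contra hcon
  push_neg at hcon
  have : ‖v‖ < Cc := by
    rw [pi_norm_lt_iff h0]
    intro i
    rw [pi_norm_lt_iff h0]
    intro j
    rw [Real.norm_eq_abs]; exact hcon i j
  linarith

end FreqSepHelpers

set_option maxHeartbeats 2000000 in
/-- **Lemma 4.2.**  Under (C1)–(C5), if a pair of sequences `ζ, ζ̃` is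
frequently separated, then the pair of bounded solutions `φ_ζ, φ_ζ̃` of the SICNN is
frequently `(ε₀, ε₁)`-separated for some `ε₀, ε₁ > 0`. -/
theorem frequently_separated_solutions
    (θ : ℤ → ℝ) (ω : ℝ) (p : ℕ) (hts : TimeScaleHyp θ ω p) 
    (m n r : ℕ) (a : Fin m → Fin n → ℝ) (ha : ∀ i j, 0 < a i j)
    (C : Fin m → Fin n → Fin m → Fin n → ℝ) (hCpos : ∀ i j i' j', 0 ≤ C i j i' j')
    (f : ℝ → ℝ) (hf : Continuous f) 
    (Λ : Set (Fin m → Fin n → ℝ)) (hΛ : IsCompact Λ)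
    (F : (Fin m → Fin n → ℝ) → Fin m → Fin n → ℝ) (hF : ContinuousOn F Λ)
    (hFmap : Set.MapsTo F Λ Λ) 
    (hC1 : ∀ (i : Fin m) (j : Fin n) (k : ℤ), tdelta θ k * a i j ≠ 1)
    (lam : ℝ) (hlam : IsLeast {x : ℝ | ∃ i j, x = lamij θ ω p (a i j)} lam)
    (hC2 : 0 < lam)
    (Mf : ℝ) (hMf : 0 < Mf) (hC3 : ∀ s : ℝ, |f s| ≤ Mf)
    (Lf : ℝ) (hLf : 0 < Lf) (hC4 : ∀ s₁ s₂ : ℝ, |f s₁ - f s₂| ≤ Lf * |s₁ - s₂|) 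
    (K : Fin m → Fin n → ℝ) (hKpos : ∀ i j, 0 < K i j)
    (hK : ∀ (i : Fin m) (j : Fin n) (s τ : ℝ), τ ≤ s →
      |ufun θ (a i j) s τ| ≤ K i j * Real.exp (-(lamij θ ω p (a i j)) * (s - τ)))
    (δm : ℝ) (hδm : IsGreatest (tdelta θ '' Set.Icc (1 : ℤ) (p : ℤ)) δm)
    (cb : ℝ) (hcb : IsGreatest {x : ℝ | ∃ i j, x =
      (K i j / lamij θ ω p (a i j) +
        (p : ℝ) * δm * K i j / (1 - Real.exp (-(lamij θ ω p (a i j)) * psi θ ω))) *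
      coupSum r C i j} cb)
    (hMfcb : Mf * cb < 1)
    (MF : ℝ) (hMF : IsGreatest ((fun η => ‖F η‖) '' Λ) MF)
    (κ : ℝ) (hκ : IsGreatest {x : ℝ | ∃ i j, x =
      K i j / lamij θ ω p (a i j) +
        (p : ℝ) * δm * K i j / (1 - Real.exp (-(lamij θ ω p (a i j)) * psi θ ω))} κ)
    (H0 : ℝ) (hH0 : H0 = MF / (1 - Mf * cb) * κ)
    (hC5 : (Mf + H0 * Lf) * cb < 1) 
    (ζ : ℤ → Fin m → Fin n → ℝ) (hζF : ∀ k : ℤ, ζ (k + 1) = F (ζ k))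
    (hζΛ : ∀ k : ℤ, ζ k ∈ Λ)
    (L : ℝ → Fin m → Fin n → ℝ)
    (hL : ∀ k : ℤ, ∀ t ∈ Set.Icc (θ (2 * k - 1)) (θ (2 * k)), ∀ i j, L t i j = ζ k i j) 
    (ζ' : ℤ → Fin m → Fin n → ℝ) (hζ'F : ∀ k : ℤ, ζ' (k + 1) = F (ζ' k))
    (hζ'Λ : ∀ k : ℤ, ζ' k ∈ Λ)
    (L' : ℝ → Fin m → Fin n → ℝ)
    (hL' : ∀ k : ℤ, ∀ t ∈ Set.Icc (θ (2 * k - 1)) (θ (2 * k)), ∀ i j, L' t i j = ζ' k i j)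
    (φ : ℝ → Fin m → Fin n → ℝ)
    (hφ : IsSICNNSol θ r a C f L ζ φ) (hφb : ∀ t ∈ TScale θ, ‖φ t‖ ≤ H0)
    (φ' : ℝ → Fin m → Fin n → ℝ)
    (hφ' : IsSICNNSol θ r a C f L' ζ' φ') (hφ'b : ∀ t ∈ TScale θ, ‖φ' t‖ ≤ H0)
    (hfs : 0 < Filter.limsup (fun k : ℤ => ‖ζ k - ζ' k‖) atTop) :
    FreqSepPair θ φ φ' := by
  classical
  obtain ⟨i₀, j₀, _⟩ := hlam.1
  have hmono := hts.mono
  -- MF and basic bounds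
  obtain ⟨η₀F, hη₀F, hMFeq⟩ := hMF.1
  have hMF0 : 0 ≤ MF := hMFeq ▸ norm_nonneg _
  have hζMF : ∀ k : ℤ, ‖ζ k‖ ≤ MF := by
    intro k
    have h1 : ζ k = F (ζ (k-1)) := by
      have h2 := hζF (k-1); rw [sub_add_cancel] at h2; exact h2
    rw [h1]; exact hMF.2 ⟨ζ (k-1), hζΛ _, rfl⟩
  have hζ'MF : ∀ k : ℤ, ‖ζ' k‖ ≤ MF := by
    intro k
    have h1 : ζ' k = F (ζ' (k-1)) := by
      have h2 := hζ'F (k-1); rw [sub_add_cancel] at h2; exact h2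
    rw [h1]; exact hMF.2 ⟨ζ' (k-1), hζ'Λ _, rfl⟩
  have hΔζ : ∀ k : ℤ, ‖ζ k - ζ' k‖ ≤ 2*MF := fun k =>
    (norm_sub_le _ _).trans (by linarith [hζMF k, hζ'MF k])
  have h0T : (0:ℝ) ∈ TScale θ := by
    refine Set.mem_iUnion.mpr ⟨0, ?_⟩
    constructor
    · norm_num [hts.theta_neg.le]
    · norm_num [hts.theta_pos.le]
  have hH0 : 0 ≤ H0 := le_trans (norm_nonneg _) (hφb 0 h0T)
  have hzb : ∀ t ∈ TScale θ, ‖φ t - φ' t‖ ≤ 2*H0 := fun t ht =>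
    (norm_sub_le _ _).trans (by linarith [hφb t ht, hφ'b t ht])
  -- global constants
  set A : ℝ := ‖a‖ with hAdef
  have hA : ∀ i j, |a i j| ≤ A := fun i j => coord_le a i j
  have hA0 : 0 ≤ A := norm_nonneg a
  set S : ℝ := ‖(coupSum r C : Fin m → Fin n → ℝ)‖ with hSdef
  have hS : ∀ i j, coupSum r C i j ≤ S := fun i j => (le_abs_self _).trans (coord_le _ i j)
  have hS0 : 0 ≤ S := norm_nonneg _
  have hcoup0 : ∀ i j, 0 ≤ coupSum r C i j := fun i j =>
    Finset.sum_nonneg (fun q _ => hCpos i j q.1 q.2)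
  set G : ℝ := Mf + Lf * H0 with hGdef
  have hG0 : 0 < G := by positivity
  set Mb : ℝ := A*(2*H0) + G*S*(2*H0) + 2*MF with hMbdef
  have hMb0 : 0 ≤ Mb := by positivity
  set M : ℝ := Mb + 1 with hMdef
  have hMpos : 0 < M := by positivity
  have hMbM : Mb ≤ M := by simp [hMdef]
  -- interaction difference bound
  have hinter : ∀ (x x' : Fin m → Fin n → ℝ), ‖x‖ ≤ H0 → ‖x'‖ ≤ H0 → ∀ i j,
      |interSum r C f x i j - interSum r C f x' i j| ≤ G * S * ‖x - x'‖ := by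
    intro x x' hx hx' i j
    have key : ∀ q ∈ Nbhd r i j,
        |C i j q.1 q.2 * f (x q.1 q.2) * x i j - C i j q.1 q.2 * f (x' q.1 q.2) * x' i j|
          ≤ C i j q.1 q.2 * (G * ‖x - x'‖) := by
      intro q _
      have e : C i j q.1 q.2 * f (x q.1 q.2) * x i j - C i j q.1 q.2 * f (x' q.1 q.2) * x' i j
          = C i j q.1 q.2 * (f (x q.1 q.2) * (x i j - x' i j)
              + (f (x q.1 q.2) - f (x' q.1 q.2)) * x' i j) := by ring
      rw [e, abs_mul, abs_of_nonneg (hCpos i j q.1 q.2)]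
      refine mul_le_mul_of_nonneg_left ?_ (hCpos i j q.1 q.2)
      have h1 : |x i j - x' i j| ≤ ‖x - x'‖ := by
        have := coord_le (x - x') i j; simpa using this
      have h2 : |x q.1 q.2 - x' q.1 q.2| ≤ ‖x - x'‖ := by
        have := coord_le (x - x') q.1 q.2; simpa using this
      have h3 : |x' i j| ≤ H0 := le_trans (coord_le x' i j) hx'
      calc |f (x q.1 q.2) * (x i j - x' i j) + (f (x q.1 q.2) - f (x' q.1 q.2)) * x' i j|
          ≤ |f (x q.1 q.2) * (x i j - x' i j)| + |(f (x q.1 q.2) - f (x' q.1 q.2)) * x' i j| :=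
            abs_add_le _ _
        _ = |f (x q.1 q.2)| * |x i j - x' i j| + |f (x q.1 q.2) - f (x' q.1 q.2)| * |x' i j| := by
            rw [abs_mul, abs_mul]
        _ ≤ Mf * ‖x - x'‖ + (Lf * |x q.1 q.2 - x' q.1 q.2|) * H0 := by
            refine add_le_add (mul_le_mul (hC3 _) h1 (abs_nonneg _) hMf.le)
              (mul_le_mul (hC4 _ _) h3 (abs_nonneg _) (by positivity))
        _ ≤ Mf * ‖x - x'‖ + (Lf * ‖x - x'‖) * H0 := by
            refine add_le_add_right (mul_le_mul_of_nonneg_right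
              (mul_le_mul_of_nonneg_left h2 hLf.le) hH0) _
        _ = G * ‖x - x'‖ := by rw [hGdef]; ring
    have hsum : |interSum r C f x i j - interSum r C f x' i j|
        ≤ ∑ q ∈ Nbhd r i j, C i j q.1 q.2 * (G * ‖x - x'‖) := by
      unfold interSum
      rw [← Finset.sum_sub_distrib]
      exact le_trans (Finset.abs_sum_le_sum_abs _ _) (Finset.sum_le_sum key)
    rw [← Finset.sum_mul] at hsum
    calc |interSum r C f x i j - interSum r C f x' i j|
        ≤ coupSum r C i j * (G * ‖x - x'‖) := hsum
      _ ≤ S * (G * ‖x - x'‖) := by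
          refine mul_le_mul_of_nonneg_right (hS i j) (by positivity)
      _ = G * S * ‖x - x'‖ := by ring
  -- derivative of the difference on each component
  have hderiv : ∀ (k : ℤ), ∀ t ∈ Set.Icc (θ (2*k-1)) (θ (2*k)), ∀ (i : Fin m) (j : Fin n),
      HasDerivWithinAt (fun τ => φ τ i j - φ' τ i j)
        (-(a i j) * (φ t i j - φ' t i j)
          - (interSum r C f (φ t) i j - interSum r C f (φ' t) i j)
          + (ζ k i j - ζ' k i j))
        (Set.Icc (θ (2*k-1)) (θ (2*k))) t := by
    intro k t ht i j
    have h1 := (hφ.1 k t ht i j).sub (hφ'.1 k t ht i j)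
    have e : (-(a i j) * φ t i j - interSum r C f (φ t) i j + L t i j)
        - (-(a i j) * φ' t i j - interSum r C f (φ' t) i j + L' t i j)
        = -(a i j) * (φ t i j - φ' t i j)
          - (interSum r C f (φ t) i j - interSum r C f (φ' t) i j)
          + (ζ k i j - ζ' k i j) := by
      rw [hL k t ht i j, hL' k t ht i j]; ring
    rw [e] at h1
    exact h1
  -- bound on the derivative
  have hdbound : ∀ (k : ℤ), ∀ t ∈ Set.Icc (θ (2*k-1)) (θ (2*k)), ∀ (i : Fin m) (j : Fin n),
      |(-(a i j) * (φ t i j - φ' t i j)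
        - (interSum r C f (φ t) i j - interSum r C f (φ' t) i j)
        + (ζ k i j - ζ' k i j))| ≤ Mb := by
    intro k t ht i j
    have hmem : t ∈ TScale θ := comp_subset_TScale θ k ht
    have h1 : ‖φ t - φ' t‖ ≤ 2*H0 := hzb t hmem
    have h2 : |φ t i j - φ' t i j| ≤ 2*H0 := by
      have h := coord_le (φ t - φ' t) i j
      simp only [Pi.sub_apply] at h
      linarith
    have h3 : |interSum r C f (φ t) i j - interSum r C f (φ' t) i j| ≤ G*S*(2*H0) := by
      refine le_trans (hinter (φ t) (φ' t) (hφb t hmem) (hφ'b t hmem) i j) ?_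
      exact mul_le_mul_of_nonneg_left h1 (by positivity)
    have h4 : |ζ k i j - ζ' k i j| ≤ 2*MF := by
      have h := coord_le (ζ k - ζ' k) i j
      simp only [Pi.sub_apply] at h
      linarith [hΔζ k]
    have h5 : |a i j * (φ t i j - φ' t i j)| ≤ A*(2*H0) := by
      rw [abs_mul]
      exact mul_le_mul (hA i j) h2 (abs_nonneg _) hA0
    calc |(-(a i j) * (φ t i j - φ' t i j)
          - (interSum r C f (φ t) i j - interSum r C f (φ' t) i j)
          + (ζ k i j - ζ' k i j))|
        ≤ |(-(a i j) * (φ t i j - φ' t i j)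
            - (interSum r C f (φ t) i j - interSum r C f (φ' t) i j))|
          + |ζ k i j - ζ' k i j| := abs_add_le _ _
      _ ≤ |(-(a i j)) * (φ t i j - φ' t i j)|
          + |interSum r C f (φ t) i j - interSum r C f (φ' t) i j|
          + |ζ k i j - ζ' k i j| := by linarith [abs_sub (((-(a i j)) * (φ t i j - φ' t i j))) ((interSum r C f (φ t) i j - interSum r C f (φ' t) i j))]
      _ ≤ A*(2*H0) + G*S*(2*H0) + 2*MF := by
          have h6 : |(-(a i j)) * (φ t i j - φ' t i j)| = |a i j * (φ t i j - φ' t i j)| := by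
            rw [abs_mul, abs_mul, abs_neg]
          rw [h6]; linarith
      _ = Mb := hMbdef.symm
  -- Lipschitz estimate on components
  have hlip : ∀ (k : ℤ) (i : Fin m) (j : Fin n),
      ∀ s ∈ Set.Icc (θ (2*k-1)) (θ (2*k)), ∀ t ∈ Set.Icc (θ (2*k-1)) (θ (2*k)),
      |(φ s i j - φ' s i j) - (φ t i j - φ' t i j)| ≤ M * |s - t| := by
    intro k i j s hs t ht
    have h := Convex.norm_image_sub_le_of_norm_hasDerivWithin_le
      (f := fun τ => φ τ i j - φ' τ i j)
      (f' := fun τ => -(a i j) * (φ τ i j - φ' τ i j)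
          - (interSum r C f (φ τ) i j - interSum r C f (φ' τ) i j)
          + (ζ k i j - ζ' k i j)) (C := M)
      (fun x hx => hderiv k x hx i j)
      (fun x hx => by rw [Real.norm_eq_abs]; exact (hdbound k x hx i j).trans hMbM)
      (convex_Icc _ _) ht hs
    simpa [Real.norm_eq_abs] using h
  -- frequently large ζ-differences
  have hcofreq : ∃ᶠ k in atTop, (Filter.limsup (fun k : ℤ => ‖ζ k - ζ' k‖) atTop)/2
      < ‖ζ k - ζ' k‖ := by
    apply Filter.frequently_lt_of_lt_limsup
    · apply Filter.IsBoundedUnder.isCoboundedUnder_le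
      exact Filter.isBoundedUnder_of_eventually_ge
        (Filter.Eventually.of_forall (fun k => norm_nonneg _))
    · linarith
  set c : ℝ := (Filter.limsup (fun k : ℤ => ‖ζ k - ζ' k‖) atTop)/2 with hcdef
  have hc : 0 < c := by rw [hcdef]; linarith
  have hpick : ∀ K : ℤ, ∃ k, K ≤ k ∧ c < ‖ζ k - ζ' k‖ := by
    intro K
    obtain ⟨k, hk1, hk2⟩ := (Filter.frequently_atTop.mp hcofreq) K
    exact ⟨k, hk1, hk2⟩
  have hc2MF : c ≤ 2*MF := by
    obtain ⟨k, _, hk⟩ := hpick 0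
    linarith [hΔζ k]
  -- gap lower bound
  have hδpos : ∀ k : ℤ, 0 < tdelta θ k := fun k => sub_pos.mpr (hmono (by omega))
  have hpne : (Finset.range p).Nonempty := ⟨0, Finset.mem_range.mpr hts.p_pos⟩
  set dmin : ℝ := (Finset.range p).inf' hpne (fun ν => tdelta θ (ν:ℤ)) with hdmindef
  have hdminpos : 0 < dmin := by
    rw [hdmindef, Finset.lt_inf'_iff]
    exact fun ν _ => hδpos _
  have hdmin : ∀ k : ℤ, dmin ≤ tdelta θ k := by
    intro k
    obtain ⟨ν, hν, he⟩ := tdelta_reduce hts.p_pos hts.delta_periodic k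
    rw [he, hdmindef]
    exact Finset.inf'_le _ (Finset.mem_range.mpr hν)
  -- window of long components
  set N : ℕ := max 1 ⌈ω/dmin⌉₊ with hNdef
  have hN1 : 1 ≤ N := le_max_left _ _
  set η : ℝ := θ 0 - θ (-1) with hηdef
  have hη : 0 < η := by rw [hηdef]; linarith [hts.theta_neg, hts.theta_pos]
  have hP0 : η ≤ θ (2*(0:ℤ)) - θ (2*(0:ℤ)-1) := by norm_num [hηdef]
  have hstep : ∀ k : ℤ, η ≤ θ (2*k) - θ (2*k-1) →
      ∃ k', k < k' ∧ k' ≤ k + N ∧ η ≤ θ (2*k') - θ (2*k'-1) := by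
    intro k hk
    have hsub : Set.Icc (θ (2*k-1) + ω) (θ (2*k) + ω) ⊆ TScale θ := by
      intro s hs
      have h1 : s - ω ∈ Set.Icc (θ (2*k-1)) (θ (2*k)) :=
        ⟨by linarith [hs.1], by linarith [hs.2]⟩
      have h2 := hts.omega_prop _ (comp_subset_TScale θ k h1)
      simpa using h2
    have hle : θ (2*k-1) + ω ≤ θ (2*k) + ω := by
      have := hmono (show (2*k-1:ℤ) < 2*k by omega); linarith
    obtain ⟨k', h1, h2⟩ := single_comp hmono hle hsub
    have hkk' : k < k' := by
      by_contra hcon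
      push_neg at hcon
      have h3 : θ (2*k') ≤ θ (2*k) := hmono.monotone (by omega)
      linarith [hts.omega_pos]
    refine ⟨k', hkk', ?_, ?_⟩
    · by_contra hcon
      push_neg at hcon
      set d : ℕ := (k' - k).toNat with hddef
      have hd1 : 1 ≤ d := by omega
      have hkd : k + (d:ℤ) = k' := by omega
      have hgap := gaps_lb hmono hdmin d k hd1
      rw [hkd] at hgap
      have h3 : θ (2*k'-1) ≤ θ (2*k-1) + ω := h1
      have h4 : θ (2*k-1) < θ (2*k) := hmono (by omega)
      have h5 : (d:ℝ)*dmin < ω := by linarith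
      have h6 : ((N:ℝ)+1) ≤ (d:ℝ) := by
        have : N + 1 ≤ d := by omega
        exact_mod_cast this
      have h7 : ω/dmin ≤ (⌈ω/dmin⌉₊:ℝ) := Nat.le_ceil _
      have h8 : (⌈ω/dmin⌉₊:ℝ) ≤ (N:ℝ) := by
        have : ⌈ω/dmin⌉₊ ≤ N := le_max_right _ _
        exact_mod_cast this
      have h9 : ω ≤ (N:ℝ)*dmin := by
        have := mul_le_mul_of_nonneg_right (h7.trans h8) hdminpos.le
        rwa [div_mul_cancel₀ _ hdminpos.ne'] at this
      nlinarith
    · linarith [h1, h2]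
  have hwin : ∀ K : ℤ, 1 ≤ K → ∃ ks : ℤ, K - N ≤ ks ∧ ks < K ∧
      η ≤ θ (2*ks) - θ (2*ks-1) := by
    have hstep' : ∀ k : ℤ, ∃ k', (η ≤ θ (2*k) - θ (2*k-1)) →
        (k < k' ∧ k' ≤ k + N ∧ η ≤ θ (2*k') - θ (2*k'-1)) := by
      intro k
      by_cases h : η ≤ θ (2*k) - θ (2*k-1)
      · obtain ⟨k', h'⟩ := hstep k h
        exact ⟨k', fun _ => h'⟩
      · exact ⟨k+1, fun h' => absurd h' h⟩
    choose nxt hnxt using hstep'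
    set u : ℕ → ℤ := fun j => nxt^[j] 0 with hudef
    have huS : ∀ j, u (j+1) = nxt (u j) := by
      intro j
      rw [hudef]
      exact Function.iterate_succ_apply' nxt j 0
    have hPu : ∀ j, η ≤ θ (2*(u j)) - θ (2*(u j)-1) := by
      intro j
      induction j with
      | zero => exact hP0
      | succ j ih =>
        rw [huS]
        exact (hnxt (u j) ih).2.2
    have humono : ∀ j, u j < u (j+1) ∧ u (j+1) ≤ u j + N := by
      intro j
      rw [huS]
      exact ⟨(hnxt (u j) (hPu j)).1, (hnxt (u j) (hPu j)).2.1⟩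
    have huge : ∀ j : ℕ, (j:ℤ) ≤ u j := by
      intro j
      induction j with
      | zero => simp [hudef]
      | succ j ih =>
        have := (humono j).1
        push_cast
        omega
    intro K hK
    have hex : ∃ j : ℕ, K - N ≤ u j := by
      refine ⟨K.toNat, ?_⟩
      have := huge K.toNat
      omega
    set j0 := Nat.find hex with hj0def
    have hspec : K - N ≤ u j0 := Nat.find_spec hex
    rcases Nat.eq_zero_or_pos j0 with h | h
    · refine ⟨0, ?_, by omega, hP0⟩
      have : u 0 = 0 := by simp [hudef]
      rw [h, this] at hspec
      omega
    · have hprev : ¬ (K - N ≤ u (j0 - 1)) := Nat.find_min hex (by omega)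
      push_neg at hprev
      have hj1 : j0 - 1 + 1 = j0 := by omega
      have h2 := (humono (j0-1)).2
      rw [hj1] at h2
      exact ⟨u j0, hspec, by omega, hPu j0⟩
  -- uniform continuity chain
  have hUC := hΛ.uniformContinuousOn_of_continuous hF
  rw [Metric.uniformContinuousOn_iff] at hUC
  have hmod : ∀ e : ℝ, ∃ d : ℝ, 0 < e → (0 < d ∧ d ≤ e ∧
      ∀ x ∈ Λ, ∀ y ∈ Λ, dist x y < d → dist (F x) (F y) < e) := by
    intro e
    by_cases he : 0 < e
    · obtain ⟨d, hd, hdp⟩ := hUC e he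
      exact ⟨min d e, fun _ => ⟨lt_min hd he, min_le_right _ _,
        fun x hx y hy hxy => hdp x hx y hy (lt_of_lt_of_le hxy (min_le_left _ _))⟩⟩
    · exact ⟨1, fun h => absurd h he⟩
  choose md hmd using hmod
  set g : ℕ → ℝ := fun nn => md^[nn] c with hgdef
  have hg0 : g 0 = c := rfl
  have hgS : ∀ nn, g (nn+1) = md (g nn) := by
    intro nn
    rw [hgdef]
    exact Function.iterate_succ_apply' md nn c
  have hgpos : ∀ nn, 0 < g nn := by
    intro nn
    induction nn with
    | zero => rw [hg0]; exact hc
    | succ nn ih => rw [hgS]; exact (hmd (g nn) ih).1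
  have hganti : ∀ nn, g (nn+1) ≤ g nn := fun nn => by
    rw [hgS]; exact (hmd (g nn) (hgpos nn)).2.1
  have hgmono : ∀ d1 d2 : ℕ, d1 ≤ d2 → g d2 ≤ g d1 := by
    intro d1 d2 h
    exact antitone_nat_of_succ_le hganti h
  have hchain : ∀ (k : ℤ) (dn : ℕ), c ≤ ‖ζ k - ζ' k‖ →
      g dn ≤ ‖ζ (k - dn) - ζ' (k - dn)‖ := by
    intro k dn
    induction dn with
    | zero => intro hb; rw [hg0]; simpa using hb
    | succ dcur ih =>
      intro hb
      have hd := ih hb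
      by_contra hcon
      push_neg at hcon
      set k1 : ℤ := k - ((dcur:ℤ)+1) with hk1def
      have hk1e : k - ((dcur+1:ℕ):ℤ) = k1 := by push_cast; ring
      rw [hk1e] at hcon
      rw [hgS] at hcon
      have happ := (hmd (g dcur) (hgpos dcur)).2.2 (ζ k1) (hζΛ k1) (ζ' k1) (hζ'Λ k1)
        (by rw [dist_eq_norm]; exact hcon)
      rw [dist_eq_norm, ← hζF k1, ← hζ'F k1] at happ
      have hk2 : k1 + 1 = k - (dcur:ℤ) := by rw [hk1def]; ring
      rw [hk2] at happ
      have : k - ((dcur:ℕ):ℤ) = k - (dcur:ℤ) := by norm_num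
      rw [this] at hd
      linarith
  clear_value A S G Mb M c dmin η N g
  obtain ⟨cs, hcspos, hcsc, hcsg⟩ : ∃ cs : ℝ, 0 < cs ∧ cs ≤ c ∧
      ∀ dn : ℕ, dn ≤ N → cs ≤ g dn :=
    ⟨g N, hgpos N, by rw [← hg0]; exact hgmono 0 N (Nat.zero_le N),
      fun dn h => hgmono dn N h⟩
  -- thresholds
  have hGS0 : 0 ≤ G*S := mul_nonneg hG0.le hS0
  obtain ⟨ε₀, hε₀, hε₀1, hε₀2⟩ : ∃ e : ℝ, 0 < e ∧ e ≤ cs/(8*(A+G*S+1)) ∧ e ≤ cs*η/16 := by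
    refine ⟨min (cs/(8*(A+G*S+1))) (cs*η/16), ?_, min_le_left _ _, min_le_right _ _⟩
    have hD8 : (0:ℝ) < 8*(A+G*S+1) := by linarith only [hA0, hGS0]
    exact lt_min (div_pos hcspos hD8) (div_pos (mul_pos hcspos hη) (by norm_num))
  obtain ⟨ε₁, hε₁, hε₁a, hε₁b⟩ : ∃ e : ℝ, 0 < e ∧ e ≤ η/2 ∧ M*e ≤ ε₀/2 := by
    refine ⟨min (η/2) (ε₀/(2*M)), ?_, min_le_left _ _, ?_⟩
    · exact lt_min (half_pos hη) (div_pos hε₀ (mul_pos two_pos hMpos))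
    · calc M*(min (η/2) (ε₀/(2*M))) ≤ M*(ε₀/(2*M)) :=
          mul_le_mul_of_nonneg_left (min_le_right _ _) hMpos.le
      _ = ε₀/2 := by
          rw [mul_div_assoc', mul_comm M ε₀, mul_div_mul_right _ _ hMpos.ne']
  have hcsM : cs ≤ M := by
    have h2MF : 2*MF ≤ Mb := by
      have hAH : 0 ≤ A*(2*H0) := mul_nonneg hA0 (by linarith only [hH0])
      have hGSH : 0 ≤ G*S*(2*H0) := mul_nonneg hGS0 (by linarith only [hH0])
      rw [hMbdef]; linarith only [hAH, hGSH]
    linarith only [hcsc, hc2MF, hMbM, h2MF]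
  -- the key construction at a separated index
  have hQ : ∀ k : ℤ, (N:ℤ) ≤ k → c < ‖ζ k - ζ' k‖ → ∃ (k' : ℤ) (x : ℝ),
      k - N ≤ k' ∧ k' < k ∧
      Set.Icc x (x+ε₁) ⊆ Set.Icc (θ (2*k'-1)) (θ (2*k')) ∧
      (∀ t ∈ Set.Icc x (x+ε₁), ε₀ < ‖φ t - φ' t‖) := by
    intro k hkN hkc
    obtain ⟨k', hk'1, hk'2, hk'P⟩ := hwin k (by omega)
    have hdk : cs ≤ ‖ζ k' - ζ' k'‖ := by
      have h1 := hchain k ((k - k').toNat) hkc.le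
      have h2 : k - (((k - k').toNat:ℕ):ℤ) = k' := by omega
      rw [h2] at h1
      exact le_trans (hcsg _ (by omega)) h1
    have huv : (θ (2*k'-1)) < (θ (2*k')) := hmono (by omega)
    have hηuv : η ≤ (θ (2*k')) - (θ (2*k'-1)) := hk'P
    have hbig : ∃ t₀ ∈ Set.Icc (θ (2*k'-1)) (θ (2*k')), 2*ε₀ ≤ ‖φ t₀ - φ' t₀‖ := by
      by_contra hcon
      push_neg at hcon
      have hsmall : ∀ t ∈ Set.Icc (θ (2*k'-1)) (θ (2*k')), ‖φ t - φ' t‖ ≤ 2*ε₀ :=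
        fun t ht => (hcon t ht).le
      obtain ⟨i1, j1, hij⟩ := exists_coord (ζ k' - ζ' k') hcspos hdk
      simp only [Pi.sub_apply] at hij
      set sg : ℝ := if 0 ≤ ζ k' i1 j1 - ζ' k' i1 j1 then 1 else -1 with hsgdef
      have hsgd : sg * (ζ k' i1 j1 - ζ' k' i1 j1) = |ζ k' i1 j1 - ζ' k' i1 j1| := by
        rw [hsgdef]; split_ifs with h
        · rw [abs_of_nonneg h]; ring
        · rw [abs_of_neg (not_le.mp h)]; ring
      have hsgabs : |sg| = 1 := by rw [hsgdef]; split_ifs <;> norm_num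
      clear_value sg
      have hzco : ∀ t ∈ Set.Icc (θ (2*k'-1)) (θ (2*k')), |φ t i1 j1 - φ' t i1 j1| ≤ 2*ε₀ := by
        intro t ht
        have h := coord_le (φ t - φ' t) i1 j1
        simp only [Pi.sub_apply] at h
        linarith only [h, hsmall t ht]
      have hico : ∀ t ∈ Set.Icc (θ (2*k'-1)) (θ (2*k')),
          |interSum r C f (φ t) i1 j1 - interSum r C f (φ' t) i1 j1| ≤ G*S*(2*ε₀) := by
        intro t ht
        have hmem := comp_subset_TScale θ k' ht
        exact le_trans (hinter (φ t) (φ' t) (hφb t hmem) (hφ'b t hmem) i1 j1)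
          (mul_le_mul_of_nonneg_left (hsmall t ht) hGS0)
      have hquarter : A*(2*ε₀) + G*S*(2*ε₀) ≤ cs/4 := by
        have hD : (0:ℝ) < 8*(A+G*S+1) := by linarith only [hA0, hGS0]
        have h8 : ε₀*(8*(A+G*S+1)) ≤ cs := (le_div_iff₀ hD).mp hε₀1
        linarith only [h8, hε₀.le]
      have hval : ∀ t ∈ Set.Icc (θ (2*k'-1)) (θ (2*k')),
          cs/2 ≤ sg * (-(a i1 j1) * (φ t i1 j1 - φ' t i1 j1)
            - (interSum r C f (φ t) i1 j1 - interSum r C f (φ' t) i1 j1)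
            + (ζ k' i1 j1 - ζ' k' i1 j1)) ∧
          sg * (-(a i1 j1) * (φ t i1 j1 - φ' t i1 j1)
            - (interSum r C f (φ t) i1 j1 - interSum r C f (φ' t) i1 j1)
            + (ζ k' i1 j1 - ζ' k' i1 j1)) ≤ M := by
        intro t ht
        have hX : |(-(a i1 j1) * (φ t i1 j1 - φ' t i1 j1)
            - (interSum r C f (φ t) i1 j1 - interSum r C f (φ' t) i1 j1))|
            ≤ A*(2*ε₀) + G*S*(2*ε₀) := by
          have h1 : |(-(a i1 j1)) * (φ t i1 j1 - φ' t i1 j1)| ≤ A*(2*ε₀) := by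
            rw [abs_mul, abs_neg]
            exact mul_le_mul (hA i1 j1) (hzco t ht) (abs_nonneg _) hA0
          have h2 := hico t ht
          have h3 := abs_sub ((-(a i1 j1)) * (φ t i1 j1 - φ' t i1 j1))
            ((interSum r C f (φ t) i1 j1 - interSum r C f (φ' t) i1 j1))
          linarith only [h1, h2, h3]
        constructor
        · have hsplit : sg * (-(a i1 j1) * (φ t i1 j1 - φ' t i1 j1)
              - (interSum r C f (φ t) i1 j1 - interSum r C f (φ' t) i1 j1)
              + (ζ k' i1 j1 - ζ' k' i1 j1))
              = sg * ((-(a i1 j1)) * (φ t i1 j1 - φ' t i1 j1)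
                - (interSum r C f (φ t) i1 j1 - interSum r C f (φ' t) i1 j1))
                + sg * (ζ k' i1 j1 - ζ' k' i1 j1) := by ring
          have hXsg : -(cs/4) ≤ sg * ((-(a i1 j1)) * (φ t i1 j1 - φ' t i1 j1)
              - (interSum r C f (φ t) i1 j1 - interSum r C f (φ' t) i1 j1)) := by
            have h1 : |sg * ((-(a i1 j1)) * (φ t i1 j1 - φ' t i1 j1)
                - (interSum r C f (φ t) i1 j1 - interSum r C f (φ' t) i1 j1))|
                = |(-(a i1 j1)) * (φ t i1 j1 - φ' t i1 j1)
                - (interSum r C f (φ t) i1 j1 - interSum r C f (φ' t) i1 j1)| := by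
              rw [abs_mul, hsgabs, one_mul]
            have h2 := neg_abs_le (sg * ((-(a i1 j1)) * (φ t i1 j1 - φ' t i1 j1)
                - (interSum r C f (φ t) i1 j1 - interSum r C f (φ' t) i1 j1)))
            rw [h1] at h2
            linarith only [h2, hX, hquarter]
          linarith only [hsplit, hXsg, hsgd, hij, hcspos.le]
        · have h1 := hdbound k' t ht i1 j1
          have h2 : |sg * (-(a i1 j1) * (φ t i1 j1 - φ' t i1 j1)
              - (interSum r C f (φ t) i1 j1 - interSum r C f (φ' t) i1 j1)
              + (ζ k' i1 j1 - ζ' k' i1 j1))|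
              = |(-(a i1 j1) * (φ t i1 j1 - φ' t i1 j1)
              - (interSum r C f (φ t) i1 j1 - interSum r C f (φ' t) i1 j1)
              + (ζ k' i1 j1 - ζ' k' i1 j1))| := by
            rw [abs_mul, hsgabs, one_mul]
          have h3 := le_abs_self (sg * (-(a i1 j1) * (φ t i1 j1 - φ' t i1 j1)
              - (interSum r C f (φ t) i1 j1 - interSum r C f (φ' t) i1 j1)
              + (ζ k' i1 j1 - ζ' k' i1 j1)))
          rw [h2] at h3
          linarith only [h1, h3, hMbM]
      set K₀ : ℝ := (cs/2 + M)/2 with hK₀def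
      clear_value K₀
      have hmvt := Convex.norm_image_sub_le_of_norm_hasDerivWithin_le
        (f := fun τ => sg * (φ τ i1 j1 - φ' τ i1 j1) - K₀*τ)
        (f' := fun τ => sg * (-(a i1 j1) * (φ τ i1 j1 - φ' τ i1 j1)
            - (interSum r C f (φ τ) i1 j1 - interSum r C f (φ' τ) i1 j1)
            + (ζ k' i1 j1 - ζ' k' i1 j1)) - K₀)
        (C := (M - cs/2)/2)
        (fun x hx => by
          have h1 := (hderiv k' x hx i1 j1).const_mul sg
          have h2 := (hasDerivWithinAt_id x (Set.Icc (θ (2*k'-1)) (θ (2*k')))).const_mul K₀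
          have h3 := h1.sub h2
          rw [mul_one] at h3
          convert h3 using 1
          funext τ; simp only [Pi.sub_apply, id])
        (fun x hx => by
          rw [Real.norm_eq_abs, abs_le]
          exact ⟨by linarith only [(hval x hx).1, hK₀def], by linarith only [(hval x hx).2, hK₀def]⟩)
        (convex_Icc (θ (2*k'-1)) (θ (2*k'))) (Set.left_mem_Icc.mpr huv.le) (Set.right_mem_Icc.mpr huv.le)
      rw [Real.norm_eq_abs, Real.norm_eq_abs] at hmvt
      have hvu : |(θ (2*k')) - (θ (2*k'-1))| = (θ (2*k')) - (θ (2*k'-1)) := abs_of_pos (by linarith)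
      rw [hvu] at hmvt
      have hlb : (cs/2)*((θ (2*k'))-(θ (2*k'-1))) ≤ sg*(φ (θ (2*k')) i1 j1 - φ' (θ (2*k')) i1 j1)
          - sg*(φ (θ (2*k'-1)) i1 j1 - φ' (θ (2*k'-1)) i1 j1) := by
        have h := (abs_le.mp hmvt).1
        have e : K₀*(θ (2*k')) - K₀*(θ (2*k'-1)) - (M - cs/2)/2*((θ (2*k'))-(θ (2*k'-1))) = cs/2*((θ (2*k'))-(θ (2*k'-1))) := by
          rw [hK₀def]; ring
        linarith only [h, e]
      have hub : sg*(φ (θ (2*k')) i1 j1 - φ' (θ (2*k')) i1 j1) - sg*(φ (θ (2*k'-1)) i1 j1 - φ' (θ (2*k'-1)) i1 j1) ≤ 4*ε₀ := by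
        have h1 : |sg*(φ (θ (2*k')) i1 j1 - φ' (θ (2*k')) i1 j1)| ≤ 2*ε₀ := by
          rw [abs_mul, hsgabs, one_mul]
          exact hzco (θ (2*k')) (Set.right_mem_Icc.mpr huv.le)
        have h2 : |sg*(φ (θ (2*k'-1)) i1 j1 - φ' (θ (2*k'-1)) i1 j1)| ≤ 2*ε₀ := by
          rw [abs_mul, hsgabs, one_mul]
          exact hzco (θ (2*k'-1)) (Set.left_mem_Icc.mpr huv.le)
        linarith only [(abs_le.mp h1).2, (abs_le.mp h2).1]
      have hfin1 : (cs/2)*η ≤ 4*ε₀ := by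
        have h1 : (cs/2)*η ≤ (cs/2)*((θ (2*k'))-(θ (2*k'-1))) := mul_le_mul_of_nonneg_left hηuv (by linarith only [hcspos])
        linarith only [h1, hlb, hub]
      have hfin2 : 8*ε₀ ≤ (cs/2)*η := by linarith only [hε₀2]
      linarith only [hfin1, hfin2, hε₀]
    obtain ⟨t₀, ht₀, hbigt⟩ := hbig
    obtain ⟨i1, j1, hij⟩ := exists_coord (φ t₀ - φ' t₀) (by linarith only [hε₀]) hbigt
    simp only [Pi.sub_apply] at hij
    have hsep : ∀ x : ℝ, (θ (2*k'-1)) ≤ x → x + ε₁ ≤ (θ (2*k')) → x ≤ t₀ → t₀ ≤ x + ε₁ →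
        (Set.Icc x (x+ε₁) ⊆ Set.Icc (θ (2*k'-1)) (θ (2*k')) ∧
          ∀ t ∈ Set.Icc x (x+ε₁), ε₀ < ‖φ t - φ' t‖) := by
      intro x hx1 hx2 hx3 hx4
      have hJsub : Set.Icc x (x+ε₁) ⊆ Set.Icc (θ (2*k'-1)) (θ (2*k')) :=
        fun t ht => ⟨le_trans hx1 ht.1, le_trans ht.2 hx2⟩
      refine ⟨hJsub, ?_⟩
      intro t ht
      have htt₀ : |t - t₀| ≤ ε₁ := by
        rw [abs_le]
        exact ⟨by linarith only [ht.1, ht.2, hx3, hx4], by linarith only [ht.1, ht.2, hx3, hx4]⟩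
      have hl := hlip k' i1 j1 t (hJsub ht) t₀ ht₀
      have hM1 : M*|t-t₀| ≤ M*ε₁ := mul_le_mul_of_nonneg_left htt₀ hMpos.le
      have hM2 : M*ε₁ ≤ ε₀/2 := hε₁b
      have h5 : ε₀ < |φ t i1 j1 - φ' t i1 j1| := by
        have habs := abs_sub_abs_le_abs_sub (φ t₀ i1 j1 - φ' t₀ i1 j1)
          (φ t i1 j1 - φ' t i1 j1)
        have h6 : |(φ t₀ i1 j1 - φ' t₀ i1 j1) - (φ t i1 j1 - φ' t i1 j1)| ≤ ε₀/2 := by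
          rw [abs_sub_comm]
          linarith only [hl, hM1, hM2]
        linarith only [habs, h6, hij, hε₀]
      have h6 := coord_le (φ t - φ' t) i1 j1
      simp only [Pi.sub_apply] at h6
      linarith only [h5, h6]
    by_cases hside : t₀ ≤ ((θ (2*k'-1))+(θ (2*k')))/2
    · have h := hsep t₀ ht₀.1 (by linarith [hε₁a]) (le_refl t₀) (by linarith [hε₁.le])
      exact ⟨k', t₀, by omega, hk'2, h.1, h.2⟩
    · push_neg at hside
      have h := hsep (t₀ - ε₁) (by linarith [hε₁a]) (by linarith [ht₀.2])
        (by linarith [hε₁.le]) (by linarith)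
      exact ⟨k', t₀ - ε₁, by omega, hk'2, h.1, h.2⟩
  -- construct the sequence of separated intervals
  choose pick hpick1 hpick2 using hpick
  set ks : ℕ → ℤ := fun q => Nat.rec (pick N) (fun _ kq => pick (kq + N + 1)) q with hksdef
  have hks0 : ks 0 = pick N := rfl
  have hksS : ∀ q, ks (q+1) = pick (ks q + N + 1) := fun q => rfl
  clear_value ks
  have hksN : ∀ q, (N:ℤ) ≤ ks q := by
    intro q
    induction q with
    | zero => rw [hks0]; exact hpick1 N
    | succ q ih =>
      rw [hksS]
      have h1 := hpick1 (ks q + N + 1)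
      omega
  have hksgrow : ∀ q, ks q + N + 1 ≤ ks (q+1) := fun q => by
    rw [hksS]; exact hpick1 _
  have hksc : ∀ q, c < ‖ζ (ks q) - ζ' (ks q)‖ := by
    intro q
    cases q with
    | zero => rw [hks0]; exact hpick2 N
    | succ q => rw [hksS]; exact hpick2 _
  have hQs := fun q => hQ (ks q) (hksN q) (hksc q)
  choose kk xx hkk1 hkk2 hkk3 hkk4 using hQs
  have hkkmono : ∀ q, kk q < kk (q+1) := by
    intro q
    have h1 := hkk1 (q+1)
    have h2 := hkk2 q
    have h3 := hksgrow q
    omega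
  have hkkSM : StrictMono kk := strictMono_nat_of_lt_succ hkkmono
  refine ⟨ε₀, hε₀, ε₁, hε₁, fun q => Set.Icc (xx q) (xx q + ε₁), ?_, ?_, ?_, ?_, ?_⟩
  · exact fun q => (hkk3 q).trans (comp_subset_TScale θ (kk q))
  · exact fun q => Set.ordConnected_Icc
  · intro q
    rw [Real.diam_Icc (by linarith only [hε₁] : xx q ≤ xx q + ε₁)]
    linarith only []
  · have hdisj : ∀ q q' : ℕ, q < q' →
        Disjoint (Set.Icc (xx q) (xx q + ε₁)) (Set.Icc (xx q') (xx q' + ε₁)) := by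
      intro q q' hqq
      rw [Set.disjoint_left]
      intro t ht ht'
      have h1 : t ≤ θ (2*(kk q)) := ((hkk3 q) ht).2
      have h2 : θ (2*(kk q')-1) ≤ t := ((hkk3 q') ht').1
      have h3 : θ (2*(kk q)) < θ (2*(kk q')-1) := by
        refine hmono ?_
        have := hkkSM hqq
        omega
      linarith only [h1, h2, h3]
    intro q q' hqq
    rcases hqq.lt_or_gt with h | h
    · exact hdisj q q' h
    · exact (hdisj q' q h).symm
  · intro q t ht
    exact hkk4 q t ht
end
end
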